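/- arXiv:2109.11144 — 2 statements merged into one kernel-verified Lean document; each statement's English description precedes it below -/
import Mathlib

section
/- If a bipartite density operator ρ on A⊗B is component-wise non-negative in some orthonormal product basis, and σ is any bipartite density operator on A'⊗B', then Λ²(ρ ⊗ σ) = Λ²(ρ)·Λ²(σ), where the tensor product is across the cut AA':BB'. -/
open scoped BigOperators Kronecker ComplexOrder
open Matrix

noncomputable section

/-- A density operator: positive semidefinite with unit trace. -/
def IsDensity {ι : Type*} [Fintype ι] (ρ : Matrix ι ι ℂ) : Prop :=
  ρ.PosSemidef ∧ ρ.trace = 1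

/-- A separable bipartite positive operator: a nonnegative combination of
tensor products of positive operators. -/
def IsSep {ιA ιB : Type*} [Fintype ιA] [Fintype ιB]
    (Ω : Matrix (ιA × ιB) (ιA × ιB) ℂ) : Prop :=
  ∃ (n : ℕ) (a : Fin n → Matrix ιA ιA ℂ) (b : Fin n → Matrix ιB ιB ℂ),
    (∀ i, (a i).PosSemidef) ∧ (∀ i, (b i).PosSemidef) ∧
      Ω = ∑ i, a i ⊗ₖ b i

/-- Partial trace over the first (A) system. -/
def ptraceA {ιA ιB : Type*} [Fintype ιA]
    (Ω : Matrix (ιA × ιB) (ιA × ιB) ℂ) : Matrix ιB ιB ℂ :=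
  Matrix.of fun k l => ∑ i, Ω (i, k) (i, l)

/-- The Choi matrix of a linear map on matrices. -/
def choi {ιA ιB : Type*} [Fintype ιA] [DecidableEq ιA]
    (Φ : Matrix ιA ιA ℂ →ₗ[ℂ] Matrix ιB ιB ℂ) :
    Matrix (ιA × ιB) (ιA × ιB) ℂ :=
  Matrix.of fun p q => Φ (Matrix.single p.1 q.1 1) p.2 q.2

/-- A quantum channel: a completely positive (Choi matrix PSD) trace-preserving
linear map. -/
structure Channel (ιA ιB : Type*) [Fintype ιA] [DecidableEq ιA] [Fintype ιB] where
  map : Matrix ιA ιA ℂ →ₗ[ℂ] Matrix ιB ιB ℂ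
  cp : (choi map).PosSemidef
  tp : ∀ X, (map X).trace = X.trace

/-- The communication value, via the conic program over the separable cone:
`cv(N) = max { Tr[Ω J_N] : Ω separable, Tr_A Ω = I }`. -/
def cv {ιA ιB : Type*} [Fintype ιA] [DecidableEq ιA] [Fintype ιB] [DecidableEq ιB]
    (N : Channel ιA ιB) : ℝ :=
  sSup {r | ∃ Ω : Matrix (ιA × ιB) (ιA × ιB) ℂ,
    IsSep Ω ∧ ptraceA Ω = 1 ∧ r = ((Ω * choi N.map).trace).re}

/-- The operational communication value: supremum over finite families of input
states and POVMs of `∑_x Tr[Π_x N(ρ_x)]`. -/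
def cvOp {ιA ιB : Type*} [Fintype ιA] [DecidableEq ιA] [Fintype ιB] [DecidableEq ιB]
    (N : Channel ιA ιB) : ℝ :=
  sSup {r | ∃ (n : ℕ) (ρ : Fin n → Matrix ιA ιA ℂ) (E : Fin n → Matrix ιB ιB ℂ),
    (∀ x, IsDensity (ρ x)) ∧ (∀ x, (E x).PosSemidef) ∧ (∑ x, E x) = 1 ∧
      r = (∑ x, (E x * N.map (ρ x)).trace).re}

/-- Maximal overlap of a bipartite operator with product unit vectors
(`Λ²`, exponential of minus the geometric measure of entanglement). -/
def lam2 {ιA ιB : Type*} [Fintype ιA] [Fintype ιB]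
    (ω : Matrix (ιA × ιB) (ιA × ιB) ℂ) : ℝ :=
  sSup {r | ∃ (a : ιA → ℂ) (b : ιB → ℂ),
    (∑ i, ‖a i‖ ^ 2) = 1 ∧ (∑ k, ‖b k‖ ^ 2) = 1 ∧
      r = (star (fun p : ιA × ιB => a p.1 * b p.2) ⬝ᵥ
        ω *ᵥ fun p : ιA × ιB => a p.1 * b p.2).re}

end

/-- Tensor product of bipartite operators, reindexed along the cut `AA' : BB'`. -/
def tensorCut {ιA ιB ιA' ιB' : Type*}
    (ρ : Matrix (ιA × ιB) (ιA × ιB) ℂ) (σ : Matrix (ιA' × ιB') (ιA' × ιB') ℂ) :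
    Matrix ((ιA × ιA') × (ιB × ιB')) ((ιA × ιA') × (ιB × ιB')) ℂ :=
  Matrix.of fun p q =>
    ρ (p.1.1, p.2.1) (q.1.1, q.2.1) * σ (p.1.2, p.2.2) (q.1.2, q.2.2)

/-- A bipartite operator is component-wise non-negative if there is an
orthonormal product basis in which all its matrix entries are non-negative reals. -/
def CompNonneg {ιA ιB : Type*} [Fintype ιA] [DecidableEq ιA]
    [Fintype ιB] [DecidableEq ιB] (ρ : Matrix (ιA × ιB) (ιA × ιB) ℂ) : Prop :=
  ∃ (u : ιA → ιA → ℂ) (v : ιB → ιB → ℂ),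
    (∀ i i', star (u i) ⬝ᵥ u i' = if i = i' then 1 else 0) ∧
    (∀ j j', star (v j) ⬝ᵥ v j' = if j = j' then 1 else 0) ∧
    ∀ i j i' j',
      0 ≤ ((star fun p : ιA × ιB => u i p.1 * v j p.2) ⬝ᵥ
            ρ *ᵥ fun p : ιA × ιB => u i' p.1 * v j' p.2).re ∧
      ((star fun p : ιA × ιB => u i p.1 * v j p.2) ⬝ᵥ
            ρ *ᵥ fun p : ιA × ιB => u i' p.1 * v j' p.2).im = 0


noncomputable section AuxForLam2

open Complex

section Basic

variable {n : Type*} [Fintype n]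

private lemma qform_nonneg' {M : Matrix n n ℂ} (hM : M.PosSemidef) (x : n → ℂ) :
    0 ≤ (star x ⬝ᵥ M *ᵥ x).re ∧ (star x ⬝ᵥ M *ᵥ x).im = 0 := by
  have := hM.dotProduct_mulVec_nonneg x
  rw [Complex.nonneg_iff] at this
  exact ⟨this.1, this.2.symm⟩

private lemma sum_normSq_eq (f : n → ℂ) :
    ((∑ i, ‖f i‖ ^ 2 : ℝ) : ℂ) = ∑ i, star (f i) * f i := by
  push_cast
  refine Finset.sum_congr rfl fun i _ => ?_
  rw [RCLike.star_def, RCLike.conj_mul]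
  norm_cast

private lemma psd_entry_cs {M : Matrix n n ℂ} (hM : M.PosSemidef) (k k' : n) :
    ‖M k k'‖ ^ 2 ≤ (M k k).re * (M k' k').re := by
  obtain ⟨B, rfl⟩ : ∃ B : Matrix n n ℂ, M = Bᴴ * B := by
    classical
    open scoped MatrixOrder in
    obtain ⟨B, rfl⟩ := CStarAlgebra.nonneg_iff_eq_star_mul_self.mp hM.nonneg
    exact ⟨B, rfl⟩
  classical
  have hcol : ∀ a b : n, (Bᴴ * B) a b = ∑ s, star (B s a) * B s b := by
    intro a b; simp [Matrix.mul_apply, Matrix.conjTranspose_apply]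
  have hdiag : ∀ a : n, ((Bᴴ * B) a a).re = ∑ s, ‖B s a‖ ^ 2 := by
    intro a
    have h := sum_normSq_eq (fun s => B s a)
    rw [hcol a a, ← h, Complex.ofReal_re]
  have key : ∀ a b : n, ‖(Bᴴ * B) a b‖ ^ 2 ≤ (∑ s, ‖B s a‖ ^ 2) * (∑ s, ‖B s b‖ ^ 2) := by
    intro a b
    let x : EuclideanSpace ℂ n := (WithLp.equiv 2 _).symm (fun s => B s a)
    let y : EuclideanSpace ℂ n := (WithLp.equiv 2 _).symm (fun s => B s b)
    have hinner : (inner ℂ x y : ℂ) = (Bᴴ * B) a b := by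
      rw [hcol]; simp [x, y, PiLp.inner_apply, RCLike.inner_apply, mul_comm]
    have h1 := norm_inner_le_norm (𝕜 := ℂ) x y
    have hx : ‖x‖ ^ 2 = ∑ s, ‖B s a‖ ^ 2 := by
      rw [EuclideanSpace.norm_eq, Real.sq_sqrt (by positivity)]; rfl
    have hy : ‖y‖ ^ 2 = ∑ s, ‖B s b‖ ^ 2 := by
      rw [EuclideanSpace.norm_eq, Real.sq_sqrt (by positivity)]; rfl
    calc ‖(Bᴴ * B) a b‖ ^ 2 = ‖(inner ℂ x y : ℂ)‖ ^ 2 := by rw [hinner]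
      _ ≤ (‖x‖ * ‖y‖) ^ 2 := by
          nlinarith [norm_nonneg x, norm_nonneg y, norm_nonneg ((inner ℂ x y : ℂ))]
      _ = (∑ s, ‖B s a‖ ^ 2) * (∑ s, ‖B s b‖ ^ 2) := by rw [mul_pow, hx, hy]
  rw [hdiag, hdiag]
  exact key k k'

private lemma dot_expand (M : Matrix n n ℂ) (x y : n → ℂ) :
    star x ⬝ᵥ M *ᵥ y = ∑ p, ∑ q, star (x p) * M p q * y q := by
  simp [dotProduct, Matrix.mulVec, Finset.mul_sum, mul_assoc]

private lemma sum4_swap {A B C D : Type*} [Fintype A] [Fintype B] [Fintype C] [Fintype D]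
    (f : A → B → C → D → ℂ) :
    ∑ a, ∑ b, ∑ c, ∑ d, f a b c d = ∑ c, ∑ d, ∑ a, ∑ b, f a b c d := by
  calc ∑ a, ∑ b, ∑ c, ∑ d, f a b c d
      = ∑ a, ∑ c, ∑ b, ∑ d, f a b c d :=
        Finset.sum_congr rfl fun a _ => Finset.sum_comm
    _ = ∑ c, ∑ a, ∑ b, ∑ d, f a b c d := Finset.sum_comm
    _ = ∑ c, ∑ a, ∑ d, ∑ b, f a b c d :=
        Finset.sum_congr rfl fun c _ => Finset.sum_congr rfl fun a _ => Finset.sum_comm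
    _ = ∑ c, ∑ d, ∑ a, ∑ b, f a b c d :=
        Finset.sum_congr rfl fun c _ => Finset.sum_comm

private lemma triple_apply {P Q : Type*} [Fintype Q] [Fintype P]
    (σ : Matrix Q Q ℂ) (M : Matrix Q P ℂ) (k k' : P) :
    (Mᴴ * σ * M) k k' = star (fun s => M s k) ⬝ᵥ σ *ᵥ (fun s => M s k') := by
  calc (Mᴴ * σ * M) k k' = ∑ t, ∑ s, star (M s k) * σ s t * M t k' := by
        simp [Matrix.mul_apply, Matrix.conjTranspose_apply, Finset.sum_mul]
    _ = ∑ s, ∑ t, star (M s k) * σ s t * M t k' := Finset.sum_comm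
    _ = star (fun s => M s k) ⬝ᵥ σ *ᵥ (fun s => M s k') := (dot_expand _ _ _).symm

private lemma trace_form {P : Type*} [Fintype P] (A B : Matrix P P ℂ) :
    (A * Bᵀ).trace = ∑ p, ∑ q, A p q * B p q := by
  simp [Matrix.trace, Matrix.diag, Matrix.mul_apply]

private lemma qform_expansion {P K : Type*} [Fintype P] [Fintype K]
    (ρ : Matrix P P ℂ) (wv : K → P → ℂ) (c : K → ℂ) :
    star (fun p => ∑ k, c k * wv k p) ⬝ᵥ ρ *ᵥ (fun p => ∑ k, c k * wv k p)
      = ∑ k, ∑ k', star (c k) * c k' * (star (wv k) ⬝ᵥ ρ *ᵥ wv k') := by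
  rw [dot_expand]
  calc ∑ p, ∑ q, star ((fun p => ∑ k, c k * wv k p) p) * ρ p q
          * ((fun p => ∑ k, c k * wv k p) q)
      = ∑ p, ∑ q, ∑ k, ∑ k',
          (star (c k) * star (wv k p)) * ρ p q * (c k' * wv k' q) := by
        refine Finset.sum_congr rfl fun p _ => Finset.sum_congr rfl fun q _ => ?_
        simp only [star_sum, star_mul']
        rw [Finset.sum_mul, Finset.sum_mul]
        refine Finset.sum_congr rfl fun k _ => ?_
        rw [Finset.mul_sum]
    _ = ∑ k, ∑ k', ∑ p, ∑ q,
          (star (c k) * star (wv k p)) * ρ p q * (c k' * wv k' q) := sum4_swap _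
    _ = ∑ k, ∑ k', star (c k) * c k' * (star (wv k) ⬝ᵥ ρ *ᵥ wv k') := by
        refine Finset.sum_congr rfl fun k _ => Finset.sum_congr rfl fun k' _ => ?_
        rw [dot_expand, Finset.mul_sum]
        refine Finset.sum_congr rfl fun p _ => ?_
        rw [Finset.mul_sum]
        refine Finset.sum_congr rfl fun q _ => by ring

private lemma qform_scale {Q : Type*} [Fintype Q] (σ : Matrix Q Q ℂ) (f : Q → ℂ) (d : ℂ) :
    (star (fun s => f s * d) ⬝ᵥ σ *ᵥ fun s => f s * d) = (star d * d) * (star f ⬝ᵥ σ *ᵥ f) := by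
  rw [dot_expand, dot_expand, Finset.mul_sum]
  refine Finset.sum_congr rfl fun s _ => ?_
  rw [Finset.mul_sum]
  refine Finset.sum_congr rfl fun t _ => by simp only [star_mul']; ring

private lemma parseval {K : Type*} [Fintype K] [DecidableEq K]
    (u : K → K → ℂ) (hu : ∀ i i', star (u i) ⬝ᵥ u i' = if i = i' then 1 else 0)
    (f : K → ℂ) :
    ∑ i, ‖∑ p, star (u i p) * f p‖ ^ 2 = ∑ p, ‖f p‖ ^ 2 := by
  set Uc : Matrix K K ℂ := Matrix.of fun i p => star (u i p) with hUc
  have hUU : Uc * Ucᴴ = 1 := by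
    ext i i'
    have h := hu i i'
    simp only [dotProduct, Pi.star_apply] at h
    simpa [hUc, Matrix.mul_apply, Matrix.conjTranspose_apply, Matrix.one_apply] using h
  have hUU' : Ucᴴ * Uc = 1 := mul_eq_one_comm.mp hUU
  have key : star (Uc *ᵥ f) ⬝ᵥ (Uc *ᵥ f) = star f ⬝ᵥ f := by
    rw [Matrix.star_mulVec, dotProduct_mulVec, Matrix.vecMul_vecMul, hUU',
      Matrix.vecMul_one]
  have h2 : (↑(∑ i, ‖∑ p, star (u i p) * f p‖ ^ 2) : ℂ) = (↑(∑ p, ‖f p‖ ^ 2 : ℝ) : ℂ) := by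
    rw [sum_normSq_eq, sum_normSq_eq]
    calc ∑ i, star (∑ p, star (u i p) * f p) * (∑ p, star (u i p) * f p)
        = star (Uc *ᵥ f) ⬝ᵥ (Uc *ᵥ f) := by
          simp [dotProduct, Matrix.mulVec, hUc]
      _ = star f ⬝ᵥ f := key
      _ = ∑ p, star (f p) * f p := by simp [dotProduct]
  exact_mod_cast h2

private lemma on_norm {K P : Type*} [Fintype K] [Fintype P] [DecidableEq P] [DecidableEq K]
    (u : K → P → ℂ) (hu : ∀ i i', star (u i) ⬝ᵥ u i' = if i = i' then 1 else 0)
    (c : K → ℝ) :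
    ∑ p, ‖∑ i, (c i : ℂ) * u i p‖ ^ 2 = ∑ i, (c i) ^ 2 := by
  have h1 : ∀ i i', star (u i) ⬝ᵥ (1 : Matrix P P ℂ) *ᵥ u i' = if i = i' then 1 else 0 := by
    intro i i'; rw [Matrix.one_mulVec]; exact hu i i'
  have h2 : (↑(∑ p, ‖∑ i, (c i : ℂ) * u i p‖ ^ 2) : ℂ) = (↑(∑ i, (c i) ^ 2 : ℝ) : ℂ) := by
    rw [sum_normSq_eq]
    calc ∑ p, star (∑ i, (c i : ℂ) * u i p) * (∑ i, (c i : ℂ) * u i p)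
        = star (fun p => ∑ i, (c i : ℂ) * u i p) ⬝ᵥ
            (1 : Matrix P P ℂ) *ᵥ (fun p => ∑ i, (c i : ℂ) * u i p) := by
          rw [Matrix.one_mulVec]; simp [dotProduct]
      _ = ∑ i, ∑ i', star ((c i : ℂ)) * (c i' : ℂ) *
            (star (u i) ⬝ᵥ (1 : Matrix P P ℂ) *ᵥ u i') := qform_expansion _ _ _
      _ = (↑(∑ i, (c i) ^ 2 : ℝ) : ℂ) := by
          simp only [h1, Complex.conj_ofReal, mul_ite, mul_one, mul_zero]
          push_cast
          simp [Finset.sum_ite_eq', sq]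
  exact_mod_cast h2

end Basic

section L2Set

variable {ι₁ ι₂ : Type*} [Fintype ι₁] [Fintype ι₂]

def l2set (ω : Matrix (ι₁ × ι₂) (ι₁ × ι₂) ℂ) : Set ℝ :=
  {r | ∃ (a : ι₁ → ℂ) (b : ι₂ → ℂ),
    (∑ i, ‖a i‖ ^ 2) = 1 ∧ (∑ k, ‖b k‖ ^ 2) = 1 ∧
      r = (star (fun p : ι₁ × ι₂ => a p.1 * b p.2) ⬝ᵥ
        ω *ᵥ fun p : ι₁ × ι₂ => a p.1 * b p.2).re}

lemma lam2_eq_sSup (ω : Matrix (ι₁ × ι₂) (ι₁ × ι₂) ℂ) : lam2 ω = sSup (l2set ω) := rfl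

lemma l2set_bddAbove (ω : Matrix (ι₁ × ι₂) (ι₁ × ι₂) ℂ) : BddAbove (l2set ω) := by
  refine ⟨∑ p, ∑ q, ‖ω p q‖, ?_⟩
  rintro r ⟨a, b, ha, hb, rfl⟩
  set w : ι₁ × ι₂ → ℂ := fun p => a p.1 * b p.2 with hw
  have hwle : ∀ p, ‖w p‖ ≤ 1 := by
    intro p
    have h1 : ‖a p.1‖ ^ 2 ≤ 1 := ha ▸ Finset.single_le_sum
      (f := fun i => ‖a i‖ ^ 2) (fun i _ => by positivity) (Finset.mem_univ p.1)
    have h2 : ‖b p.2‖ ^ 2 ≤ 1 := hb ▸ Finset.single_le_sum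
      (f := fun i => ‖b i‖ ^ 2) (fun i _ => by positivity) (Finset.mem_univ p.2)
    have h3 : ‖w p‖ ^ 2 ≤ 1 := by
      rw [hw]
      simp only [norm_mul, mul_pow]
      nlinarith [sq_nonneg (‖a p.1‖), sq_nonneg (‖b p.2‖)]
    nlinarith [norm_nonneg (w p)]
  calc (star w ⬝ᵥ ω *ᵥ w).re ≤ ‖star w ⬝ᵥ ω *ᵥ w‖ := Complex.re_le_norm _
    _ ≤ ∑ p, ‖star (w p) * (ω *ᵥ w) p‖ := by
        rw [dotProduct]
        exact (norm_sum_le _ _).trans_eq rfl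
    _ ≤ ∑ p, ∑ q, ‖ω p q‖ := by
        refine Finset.sum_le_sum fun p _ => ?_
        rw [norm_mul, norm_star]
        calc ‖w p‖ * ‖(ω *ᵥ w) p‖ ≤ 1 * ‖(ω *ᵥ w) p‖ :=
              mul_le_mul_of_nonneg_right (hwle p) (norm_nonneg _)
          _ = ‖∑ q, ω p q * w q‖ := by rw [one_mul]; rfl
          _ ≤ ∑ q, ‖ω p q * w q‖ := norm_sum_le _ _
          _ ≤ ∑ q, ‖ω p q‖ := by
              refine Finset.sum_le_sum fun q _ => ?_
              rw [norm_mul]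
              calc ‖ω p q‖ * ‖w q‖ ≤ ‖ω p q‖ * 1 :=
                    mul_le_mul_of_nonneg_left (hwle q) (norm_nonneg _)
                _ = ‖ω p q‖ := mul_one _

lemma le_lam2 {ω : Matrix (ι₁ × ι₂) (ι₁ × ι₂) ℂ} {r : ℝ} (hr : r ∈ l2set ω) :
    r ≤ lam2 ω :=
  le_csSup (l2set_bddAbove ω) hr

lemma exists_nonneg_mem [DecidableEq ι₁] [DecidableEq ι₂] [Nonempty ι₁] [Nonempty ι₂]
    {ω : Matrix (ι₁ × ι₂) (ι₁ × ι₂) ℂ} (hω : ω.PosSemidef) :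
    ∃ r ∈ l2set ω, 0 ≤ r := by
  obtain ⟨i0⟩ := (inferInstance : Nonempty ι₁)
  obtain ⟨j0⟩ := (inferInstance : Nonempty ι₂)
  set a : ι₁ → ℂ := fun i => if i = i0 then 1 else 0 with ha
  set b : ι₂ → ℂ := fun j => if j = j0 then 1 else 0 with hb
  have hsa : (∑ i, ‖a i‖ ^ 2) = 1 := by
    rw [ha]; simp [apply_ite (norm : ℂ → ℝ), apply_ite (fun r : ℝ => r ^ 2)]
  have hsb : (∑ j, ‖b j‖ ^ 2) = 1 := by
    rw [hb]; simp [apply_ite (norm : ℂ → ℝ), apply_ite (fun r : ℝ => r ^ 2)]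
  exact ⟨_, ⟨a, b, hsa, hsb, rfl⟩, (qform_nonneg' hω _).1⟩

lemma lam2_nonneg [DecidableEq ι₁] [DecidableEq ι₂] [Nonempty ι₁] [Nonempty ι₂]
    {ω : Matrix (ι₁ × ι₂) (ι₁ × ι₂) ℂ} (hω : ω.PosSemidef) : 0 ≤ lam2 ω := by
  obtain ⟨r, hr, hr0⟩ := exists_nonneg_mem hω
  exact hr0.trans (le_lam2 hr)

end L2Set

private lemma sSup_mul_sSup_le {S T : Set ℝ} {L : ℝ} (hL : 0 ≤ L) (hS : 0 ≤ sSup S)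
    (h : ∀ r ∈ S, ∀ s ∈ T, r * s ≤ L) : sSup S * sSup T ≤ L := by
  rcases eq_or_lt_of_le hS with hS0 | hS0
  · rw [← hS0, zero_mul]; exact hL
  · have hT : sSup T ≤ L / sSup S := by
      refine Real.sSup_le (fun s hs => ?_) (by positivity)
      rw [le_div_iff₀ hS0]
      rcases le_or_gt s 0 with h0 | h0
      · exact (mul_nonpos_of_nonpos_of_nonneg h0 hS).trans hL
      · have hss : sSup S ≤ L / s :=
          Real.sSup_le (fun r hr => (le_div_iff₀ h0).2 (h r hr s hs)) (by positivity)
        calc s * sSup S ≤ s * (L / s) := by nlinarith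
          _ = L := by field_simp
    calc sSup S * sSup T ≤ sSup S * (L / sSup S) := by nlinarith
      _ = L := by field_simp

private lemma tensor_qform_factor {ιA ιB ιA' ιB' : Type*}
    [Fintype ιA] [Fintype ιB] [Fintype ιA'] [Fintype ιB']
    (ρ : Matrix (ιA × ιB) (ιA × ιB) ℂ) (σ : Matrix (ιA' × ιB') (ιA' × ιB') ℂ)
    (a : ιA → ℂ) (b : ιB → ℂ) (a' : ιA' → ℂ) (b' : ιB' → ℂ) :
    (star (fun p : (ιA × ιA') × (ιB × ιB') => (a p.1.1 * a' p.1.2) * (b p.2.1 * b' p.2.2)) ⬝ᵥ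
        tensorCut ρ σ *ᵥ fun p => (a p.1.1 * a' p.1.2) * (b p.2.1 * b' p.2.2))
      = (star (fun p : ιA × ιB => a p.1 * b p.2) ⬝ᵥ ρ *ᵥ fun p => a p.1 * b p.2)
        * (star (fun p : ιA' × ιB' => a' p.1 * b' p.2) ⬝ᵥ σ *ᵥ fun p => a' p.1 * b' p.2) := by
  simp only [dot_expand]
  calc ∑ P : (ιA × ιA') × (ιB × ιB'), ∑ Q : (ιA × ιA') × (ιB × ιB'),
        star (a P.1.1 * a' P.1.2 * (b P.2.1 * b' P.2.2)) * tensorCut ρ σ P Q *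
          (a Q.1.1 * a' Q.1.2 * (b Q.2.1 * b' Q.2.2))
      = ∑ w : (((ιA × ιA') × (ιB × ιB')) × ((ιA × ιA') × (ιB × ιB'))),
          star (a w.1.1.1 * a' w.1.1.2 * (b w.1.2.1 * b' w.1.2.2)) *
            tensorCut ρ σ w.1 w.2 *
            (a w.2.1.1 * a' w.2.1.2 * (b w.2.2.1 * b' w.2.2.2)) :=
        (Fintype.sum_prod_type' (f := fun P Q : (ιA × ιA') × (ιB × ιB') =>
          star (a P.1.1 * a' P.1.2 * (b P.2.1 * b' P.2.2)) * tensorCut ρ σ P Q *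
            (a Q.1.1 * a' Q.1.2 * (b Q.2.1 * b' Q.2.2)))).symm
    _ = ∑ w : (((ιA × ιB) × (ιA × ιB)) × ((ιA' × ιB') × (ιA' × ιB'))),
          (star (a w.1.1.1 * b w.1.1.2) * ρ w.1.1 w.1.2 * (a w.1.2.1 * b w.1.2.2)) *
            (star (a' w.2.1.1 * b' w.2.1.2) * σ w.2.1 w.2.2 * (a' w.2.2.1 * b' w.2.2.2)) :=
        Fintype.sum_equiv
          ⟨fun w => (((w.1.1.1, w.1.2.1), (w.2.1.1, w.2.2.1)),
               ((w.1.1.2, w.1.2.2), (w.2.1.2, w.2.2.2))),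
           fun w => (((w.1.1.1, w.2.1.1), (w.1.1.2, w.2.1.2)),
               ((w.1.2.1, w.2.2.1), (w.1.2.2, w.2.2.2))),
           fun _ => rfl, fun _ => rfl⟩ _ _ (fun w => by
          simp only [Equiv.coe_fn_mk, tensorCut, Matrix.of_apply, star_mul']
          ring)
    _ = (∑ w1 : (ιA × ιB) × (ιA × ιB),
          star (a w1.1.1 * b w1.1.2) * ρ w1.1 w1.2 * (a w1.2.1 * b w1.2.2)) *
        (∑ w2 : (ιA' × ιB') × (ιA' × ιB'),
          star (a' w2.1.1 * b' w2.1.2) * σ w2.1 w2.2 * (a' w2.2.1 * b' w2.2.2)) := by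
        rw [Finset.sum_mul_sum]
        exact Fintype.sum_prod_type' (f := fun w1 : (ιA × ιB) × (ιA × ιB) =>
          fun w2 : (ιA' × ιB') × (ιA' × ιB') =>
            (star (a w1.1.1 * b w1.1.2) * ρ w1.1 w1.2 * (a w1.2.1 * b w1.2.2)) *
            (star (a' w2.1.1 * b' w2.1.2) * σ w2.1 w2.2 * (a' w2.2.1 * b' w2.2.2)))
    _ = (∑ p : ιA × ιB, ∑ q : ιA × ιB, star (a p.1 * b p.2) * ρ p q * (a q.1 * b q.2)) *
        (∑ s : ιA' × ιB', ∑ t : ιA' × ιB',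
          star (a' s.1 * b' s.2) * σ s t * (a' t.1 * b' t.2)) := by
        congr 1
        · exact Fintype.sum_prod_type' (f := fun p q : ιA × ιB =>
            star (a p.1 * b p.2) * ρ p q * (a q.1 * b q.2))
        · exact Fintype.sum_prod_type' (f := fun s t : ιA' × ιB' =>
            star (a' s.1 * b' s.2) * σ s t * (a' t.1 * b' t.2))

end AuxForLam2

/-- If `ρ` is component-wise non-negative and `σ` is any density operator, then
`Λ²(ρ ⊗ σ) = Λ²(ρ)·Λ²(σ)` across the cut `AA':BB'`. -/
theorem lam2_mult_of_compNonneg {ιA ιB ιA' ιB' : Type*}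
    [Fintype ιA] [DecidableEq ιA] [Fintype ιB] [DecidableEq ιB]
    [Fintype ιA'] [DecidableEq ιA'] [Fintype ιB'] [DecidableEq ιB']
    (ρ : Matrix (ιA × ιB) (ιA × ιB) ℂ) (σ : Matrix (ιA' × ιB') (ιA' × ιB') ℂ)
    (hρ : IsDensity ρ) (hσ : IsDensity σ) (hρnn : CompNonneg ρ) :
    lam2 (tensorCut ρ σ) = lam2 ρ * lam2 σ := by
  classical
  -- nonemptiness of all index types
  have hne : Nonempty (ιA × ιB) := by
    by_contra h
    rw [not_nonempty_iff] at h
    have h1 := hρ.2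
    rw [Matrix.trace] at h1
    simp [Finset.univ_eq_empty] at h1
  have hne' : Nonempty (ιA' × ιB') := by
    by_contra h
    rw [not_nonempty_iff] at h
    have h1 := hσ.2
    rw [Matrix.trace] at h1
    simp [Finset.univ_eq_empty] at h1
  haveI : Nonempty ιA := ⟨hne.some.1⟩
  haveI : Nonempty ιB := ⟨hne.some.2⟩
  haveI : Nonempty ιA' := ⟨hne'.some.1⟩
  haveI : Nonempty ιB' := ⟨hne'.some.2⟩
  -- products of members are members across the cut
  have hprod : ∀ r ∈ l2set ρ, ∀ s ∈ l2set σ, r * s ∈ l2set (tensorCut ρ σ) := by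
    rintro r ⟨a, b, ha, hb, rfl⟩ s ⟨a', b', ha', hb', rfl⟩
    refine ⟨fun i : ιA × ιA' => a i.1 * a' i.2, fun j : ιB × ιB' => b j.1 * b' j.2,
      ?_, ?_, ?_⟩
    · rw [Fintype.sum_prod_type]
      calc ∑ i, ∑ m, ‖a i * a' m‖ ^ 2 = ∑ i, ∑ m, ‖a i‖ ^ 2 * ‖a' m‖ ^ 2 := by
            simp [norm_mul, mul_pow]
        _ = (∑ i, ‖a i‖ ^ 2) * (∑ m, ‖a' m‖ ^ 2) := (Finset.sum_mul_sum _ _ _ _).symm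
        _ = 1 := by rw [ha, ha', mul_one]
    · rw [Fintype.sum_prod_type]
      calc ∑ j, ∑ n, ‖b j * b' n‖ ^ 2 = ∑ j, ∑ n, ‖b j‖ ^ 2 * ‖b' n‖ ^ 2 := by
            simp [norm_mul, mul_pow]
        _ = (∑ j, ‖b j‖ ^ 2) * (∑ n, ‖b' n‖ ^ 2) := (Finset.sum_mul_sum _ _ _ _).symm
        _ = 1 := by rw [hb, hb', mul_one]
    · have hfact : (star (fun p : (ιA × ιA') × (ιB × ιB') =>
            (a p.1.1 * a' p.1.2) * (b p.2.1 * b' p.2.2)) ⬝ᵥ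
            tensorCut ρ σ *ᵥ fun p => (a p.1.1 * a' p.1.2) * (b p.2.1 * b' p.2.2))
          = (star (fun p : ιA × ιB => a p.1 * b p.2) ⬝ᵥ ρ *ᵥ fun p => a p.1 * b p.2)
            * (star (fun p : ιA' × ιB' => a' p.1 * b' p.2) ⬝ᵥ σ *ᵥ fun p => a' p.1 * b' p.2) :=
        tensor_qform_factor ρ σ a b a' b'
      have h1 := (qform_nonneg' hρ.1 (fun p : ιA × ιB => a p.1 * b p.2)).2
      have h2 := (qform_nonneg' hσ.1 (fun p : ιA' × ιB' => a' p.1 * b' p.2)).2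
      rw [hfact, Complex.mul_re, h1, h2]
      ring
  have hLnn : 0 ≤ lam2 (tensorCut ρ σ) := by
    obtain ⟨r, hr, hr0⟩ := exists_nonneg_mem hρ.1
    obtain ⟨s, hs, hs0⟩ := exists_nonneg_mem hσ.1
    exact (mul_nonneg hr0 hs0).trans (le_lam2 (hprod r hr s hs))
  apply le_antisymm
  · -- hard direction
    rw [lam2_eq_sSup]
    refine Real.sSup_le ?_ (mul_nonneg (lam2_nonneg hρ.1) (lam2_nonneg hσ.1))
    rintro t ⟨x, y, hx, hy, rfl⟩
    obtain ⟨u, v, hu, hv, hnn⟩ := hρnn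
    have hLσ : 0 ≤ lam2 σ := lam2_nonneg hσ.1
    -- the product basis as a unitary matrix
    set W : Matrix (ιA × ιB) (ιA × ιB) ℂ :=
      Matrix.of (fun k p => star (u k.1 p.1 * v k.2 p.2)) with hWdef
    have hW : W * Wᴴ = 1 := by
      ext k k'
      have h1 := hu k.1 k'.1
      have h2 := hv k.2 k'.2
      simp only [dotProduct, Pi.star_apply] at h1 h2
      calc (W * Wᴴ) k k'
          = ∑ p : ιA × ιB, star (u k.1 p.1 * v k.2 p.2) * (u k'.1 p.1 * v k'.2 p.2) := by
            simp [hWdef, Matrix.mul_apply, Matrix.conjTranspose_apply]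
        _ = (∑ p1, star (u k.1 p1) * u k'.1 p1) * (∑ p2, star (v k.2 p2) * v k'.2 p2) := by
            rw [Finset.sum_mul_sum, Fintype.sum_prod_type]
            exact Finset.sum_congr rfl fun p1 _ => Finset.sum_congr rfl fun p2 _ => by
              rw [star_mul']; ring
        _ = (1 : Matrix (ιA × ιB) (ιA × ιB) ℂ) k k' := by
            rw [h1, h2]
            by_cases hh1 : k.1 = k'.1 <;> by_cases hh2 : k.2 = k'.2 <;>
              simp [Matrix.one_apply, Prod.ext_iff, hh1, hh2]
    have hW' : Wᴴ * W = 1 := mul_eq_one_comm.mp hW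
    -- the sigma-side kernel
    set z : (ιA × ιB) → (ιA' × ιB') → ℂ :=
      fun p s => x (p.1, s.1) * y (p.2, s.2) with hzdef
    set Z : Matrix (ιA' × ιB') (ιA × ιB) ℂ := Matrix.of (fun s p => z p s) with hZdef
    set G : Matrix (ιA × ιB) (ιA × ιB) ℂ := Zᴴ * σ * Z with hGdef
    have hGval : ∀ p q, G p q = star (z p) ⬝ᵥ σ *ᵥ z q := by
      intro p q
      rw [hGdef, triple_apply]
      rfl
    set A : Matrix (ιA × ιB) (ιA × ιB) ℂ := W * ρ * Wᴴ with hAdef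
    set Ghat : Matrix (ιA × ιB) (ιA × ιB) ℂ := Wᴴᵀ * G * Wᵀ with hGhdef
    -- identity (I): the quadratic form equals trace (ρ * Gᵀ)
    have hI : (star (fun p : (ιA × ιA') × (ιB × ιB') => x p.1 * y p.2) ⬝ᵥ
          tensorCut ρ σ *ᵥ fun p => x p.1 * y p.2) = (ρ * Gᵀ).trace := by
      rw [trace_form]
      have hR : ∑ p, ∑ q, ρ p q * G p q
          = ∑ w : (((ιA × ιB) × (ιA × ιB)) × ((ιA' × ιB') × (ιA' × ιB'))),
              ρ w.1.1 w.1.2 * (star (z w.1.1 w.2.1) * σ w.2.1 w.2.2 * z w.1.2 w.2.2) := by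
        calc ∑ p, ∑ q, ρ p q * G p q
            = ∑ pq : (ιA × ιB) × (ιA × ιB), ρ pq.1 pq.2 * G pq.1 pq.2 :=
              (Fintype.sum_prod_type' (f := fun p q : ιA × ιB => ρ p q * G p q)).symm
          _ = ∑ pq : (ιA × ιB) × (ιA × ιB), ∑ st : (ιA' × ιB') × (ιA' × ιB'),
                ρ pq.1 pq.2 * (star (z pq.1 st.1) * σ st.1 st.2 * z pq.2 st.2) := by
              refine Finset.sum_congr rfl fun pq _ => ?_
              calc ρ pq.1 pq.2 * G pq.1 pq.2
                  = ∑ s, ∑ t, ρ pq.1 pq.2 * (star (z pq.1 s) * σ s t * z pq.2 t) := by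
                    rw [hGval, dot_expand, Finset.mul_sum]
                    exact Finset.sum_congr rfl fun s _ => Finset.mul_sum _ _ _
                _ = ∑ st : (ιA' × ιB') × (ιA' × ιB'),
                      ρ pq.1 pq.2 * (star (z pq.1 st.1) * σ st.1 st.2 * z pq.2 st.2) :=
                    (Fintype.sum_prod_type' (f := fun s t : ιA' × ιB' =>
                      ρ pq.1 pq.2 * (star (z pq.1 s) * σ s t * z pq.2 t))).symm
          _ = ∑ w : (((ιA × ιB) × (ιA × ιB)) × ((ιA' × ιB') × (ιA' × ιB'))),
                ρ w.1.1 w.1.2 * (star (z w.1.1 w.2.1) * σ w.2.1 w.2.2 * z w.1.2 w.2.2) :=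
              (Fintype.sum_prod_type' (f := fun pq : (ιA × ιB) × (ιA × ιB) =>
                fun st : (ιA' × ιB') × (ιA' × ιB') =>
                  ρ pq.1 pq.2 * (star (z pq.1 st.1) * σ st.1 st.2 * z pq.2 st.2))).symm
      rw [hR]
      simp only [dot_expand]
      calc ∑ P : (ιA × ιA') × (ιB × ιB'), ∑ Q : (ιA × ιA') × (ιB × ιB'),
            star (x P.1 * y P.2) * tensorCut ρ σ P Q * (x Q.1 * y Q.2)
          = ∑ w : (((ιA × ιA') × (ιB × ιB')) × ((ιA × ιA') × (ιB × ιB'))),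
              star (x w.1.1 * y w.1.2) * tensorCut ρ σ w.1 w.2 * (x w.2.1 * y w.2.2) :=
            (Fintype.sum_prod_type' (f := fun P Q : (ιA × ιA') × (ιB × ιB') =>
              star (x P.1 * y P.2) * tensorCut ρ σ P Q * (x Q.1 * y Q.2))).symm
        _ = ∑ w : (((ιA × ιB) × (ιA × ιB)) × ((ιA' × ιB') × (ιA' × ιB'))),
              ρ w.1.1 w.1.2 * (star (z w.1.1 w.2.1) * σ w.2.1 w.2.2 * z w.1.2 w.2.2) :=
            Fintype.sum_equiv
              ⟨fun w => (((w.1.1.1, w.1.2.1), (w.2.1.1, w.2.2.1)),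
                   ((w.1.1.2, w.1.2.2), (w.2.1.2, w.2.2.2))),
               fun w => (((w.1.1.1, w.2.1.1), (w.1.1.2, w.2.1.2)),
                   ((w.1.2.1, w.2.2.1), (w.1.2.2, w.2.2.2))),
               fun _ => rfl, fun _ => rfl⟩ _ _ (fun w => by
              simp only [Equiv.coe_fn_mk, tensorCut, Matrix.of_apply, hzdef, star_mul']
              ring)
    -- identity (II): trace (ρ * Gᵀ) = ∑∑ A * Ghat
    have hII : (ρ * Gᵀ).trace = ∑ k, ∑ k', A k k' * Ghat k k' := by
      have hGhT : Ghatᵀ = W * Gᵀ * Wᴴ := by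
        rw [hGhdef]
        simp [Matrix.transpose_mul, Matrix.transpose_transpose, Matrix.mul_assoc]
      rw [← trace_form A Ghat]
      have hAG : A * Ghatᵀ = W * (ρ * Gᵀ) * Wᴴ := by
        rw [hGhT, hAdef]
        simp only [Matrix.mul_assoc]
        rw [← Matrix.mul_assoc Wᴴ W (Gᵀ * Wᴴ), hW', Matrix.one_mul]
      rw [hAG, Matrix.trace_mul_comm (W * (ρ * Gᵀ)) Wᴴ, ← Matrix.mul_assoc, hW',
        Matrix.one_mul]
    -- entries of A in terms of the given basis
    have hAval : ∀ k k' : ιA × ιB, A k k' =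
        (star fun p : ιA × ιB => u k.1 p.1 * v k.2 p.2) ⬝ᵥ
          ρ *ᵥ fun p : ιA × ιB => u k'.1 p.1 * v k'.2 p.2 := by
      intro k k'
      rw [dot_expand, hAdef]
      calc (W * ρ * Wᴴ) k k' = ∑ q, ∑ p, W k p * ρ p q * star (W k' q) := by
            simp [Matrix.mul_apply, Matrix.conjTranspose_apply, Finset.sum_mul]
        _ = ∑ p, ∑ q, star (u k.1 p.1 * v k.2 p.2) * ρ p q * (u k'.1 q.1 * v k'.2 q.2) := by
            rw [Finset.sum_comm]
            exact Finset.sum_congr rfl fun p _ => Finset.sum_congr rfl fun q _ => by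
              simp [hWdef]
        _ = _ := rfl
    have hAnn : ∀ k k' : ιA × ιB, 0 ≤ (A k k').re ∧ (A k k').im = 0 := by
      intro k k'
      rw [hAval]
      exact hnn k.1 k.2 k'.1 k'.2
    -- Ghat is PSD
    have hGps : G.PosSemidef := hσ.1.conjTranspose_mul_mul_same Z
    have hGhps : Ghat.PosSemidef := by
      have h := hGps.mul_mul_conjTranspose_same Wᴴᵀ
      have he : (Wᴴᵀ)ᴴ = Wᵀ := by
        ext i j; simp
      rwa [he] at h
    -- the alpha/beta vectors
    set α : ιA → ιA' → ℂ := fun i m => ∑ i0, star (u i i0) * x (i0, m) with hαdef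
    set β : ιB → ιB' → ℂ := fun j n => ∑ j0, star (v j j0) * y (j0, n) with hβdef
    set M0 : Matrix (ιA' × ιB') (ιA × ιB) ℂ := Z * Wᵀ with hM0def
    have hM0val : ∀ s k, M0 s k = α k.1 s.1 * β k.2 s.2 := by
      intro s k
      calc M0 s k
          = ∑ p : ιA × ιB, (x (p.1, s.1) * y (p.2, s.2)) * star (u k.1 p.1 * v k.2 p.2) := by
            simp [hM0def, Matrix.mul_apply, hZdef, hWdef, hzdef]
        _ = (∑ p1, star (u k.1 p1) * x (p1, s.1)) * (∑ p2, star (v k.2 p2) * y (p2, s.2)) := by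
            rw [Finset.sum_mul_sum, Fintype.sum_prod_type]
            exact Finset.sum_congr rfl fun p1 _ => Finset.sum_congr rfl fun p2 _ => by
              rw [star_mul']; ring
        _ = α k.1 s.1 * β k.2 s.2 := rfl
    have hGhval : ∀ k k', Ghat k k' =
        star (fun s : ιA' × ιB' => α k.1 s.1 * β k.2 s.2) ⬝ᵥ
          σ *ᵥ (fun s : ιA' × ιB' => α k'.1 s.1 * β k'.2 s.2) := by
      intro k k'
      have hGh2 : Ghat = M0ᴴ * σ * M0 := by
        rw [hGhdef, hM0def, hGdef, Matrix.conjTranspose_mul]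
        have he : (Wᵀ)ᴴ = Wᴴᵀ := by ext i j; simp
        rw [he]
        simp only [Matrix.mul_assoc]
      rw [hGh2, triple_apply,
        show (fun s => M0 s k) = (fun s : ιA' × ιB' => α k.1 s.1 * β k.2 s.2) from
          funext fun s => hM0val s k,
        show (fun s => M0 s k') = (fun s : ιA' × ιB' => α k'.1 s.1 * β k'.2 s.2) from
          funext fun s => hM0val s k']
    -- Parseval
    have hxsum : ∑ i : ιA, ∑ m : ιA', ‖α i m‖ ^ 2 = 1 := by
      have h1 : ∀ m, ∑ i, ‖α i m‖ ^ 2 = ∑ p, ‖x (p, m)‖ ^ 2 := fun m =>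
        parseval u hu (fun p => x (p, m))
      calc ∑ i, ∑ m, ‖α i m‖ ^ 2 = ∑ m, ∑ i, ‖α i m‖ ^ 2 := Finset.sum_comm
        _ = ∑ m, ∑ p, ‖x (p, m)‖ ^ 2 := Finset.sum_congr rfl fun m _ => h1 m
        _ = ∑ p, ∑ m, ‖x (p, m)‖ ^ 2 := Finset.sum_comm
        _ = 1 := by
            rw [← Fintype.sum_prod_type (f := fun P : ιA × ιA' => ‖x P‖ ^ 2)]
            exact hx
    have hysum : ∑ j : ιB, ∑ n : ιB', ‖β j n‖ ^ 2 = 1 := by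
      have h1 : ∀ n, ∑ j, ‖β j n‖ ^ 2 = ∑ p, ‖y (p, n)‖ ^ 2 := fun n =>
        parseval v hv (fun p => y (p, n))
      calc ∑ j, ∑ n, ‖β j n‖ ^ 2 = ∑ n, ∑ j, ‖β j n‖ ^ 2 := Finset.sum_comm
        _ = ∑ n, ∑ p, ‖y (p, n)‖ ^ 2 := Finset.sum_congr rfl fun n _ => h1 n
        _ = ∑ p, ∑ n, ‖y (p, n)‖ ^ 2 := Finset.sum_comm
        _ = 1 := by
            rw [← Fintype.sum_prod_type (f := fun P : ιB × ιB' => ‖y P‖ ^ 2)]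
            exact hy
    set nA : ιA → ℝ := fun i => Real.sqrt (∑ m, ‖α i m‖ ^ 2) with hnAdef
    set nB : ιB → ℝ := fun j => Real.sqrt (∑ n, ‖β j n‖ ^ 2) with hnBdef
    have hnA_nonneg : ∀ i, 0 ≤ nA i := fun i => Real.sqrt_nonneg _
    have hnB_nonneg : ∀ j, 0 ≤ nB j := fun j => Real.sqrt_nonneg _
    have hnA_sq : ∀ i, (nA i) ^ 2 = ∑ m, ‖α i m‖ ^ 2 := fun i =>
      Real.sq_sqrt (by positivity)
    have hnB_sq : ∀ j, (nB j) ^ 2 = ∑ n, ‖β j n‖ ^ 2 := fun j =>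
      Real.sq_sqrt (by positivity)
    have hnA_sum : ∑ i, (nA i) ^ 2 = 1 := by
      calc ∑ i, (nA i) ^ 2 = ∑ i, ∑ m, ‖α i m‖ ^ 2 :=
            Finset.sum_congr rfl fun i _ => hnA_sq i
        _ = 1 := hxsum
    have hnB_sum : ∑ j, (nB j) ^ 2 = 1 := by
      calc ∑ j, (nB j) ^ 2 = ∑ j, ∑ n, ‖β j n‖ ^ 2 :=
            Finset.sum_congr rfl fun j _ => hnB_sq j
        _ = 1 := hysum
    set c : ιA × ιB → ℝ := fun k => nA k.1 * nB k.2 with hcdef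
    have hc_nonneg : ∀ k, 0 ≤ c k := fun k => mul_nonneg (hnA_nonneg _) (hnB_nonneg _)
    -- diagonal bound
    have hdre : ∀ k, 0 ≤ (Ghat k k).re := by
      intro k
      rw [hGhval]
      exact (qform_nonneg' hσ.1 _).1
    have hdiag : ∀ k : ιA × ιB, (Ghat k k).re ≤ lam2 σ * (c k) ^ 2 := by
      intro k
      by_cases hza : ∀ m, α k.1 m = 0
      · have hGh0 : Ghat k k = 0 := by
          rw [hGhval]
          have hv0 : (fun s : ιA' × ιB' => α k.1 s.1 * β k.2 s.2) = fun _ => 0 :=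
            funext fun s => by rw [hza s.1, zero_mul]
          rw [hv0]
          simp [dotProduct]
        rw [hGh0]
        simp only [Complex.zero_re]
        positivity
      by_cases hzb : ∀ n, β k.2 n = 0
      · have hGh0 : Ghat k k = 0 := by
          rw [hGhval]
          have hv0 : (fun s : ιA' × ιB' => α k.1 s.1 * β k.2 s.2) = fun _ => 0 :=
            funext fun s => by rw [hzb s.2, mul_zero]
          rw [hv0]
          simp [dotProduct]
        rw [hGh0]
        simp only [Complex.zero_re]
        positivity
      push_neg at hza hzb
      have hcA : 0 < nA k.1 := by
        rw [hnAdef]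
        refine Real.sqrt_pos.mpr ?_
        obtain ⟨m, hm⟩ := hza
        have : 0 < ‖α k.1 m‖ ^ 2 := pow_pos (norm_pos_iff.mpr hm) 2
        exact this.trans_le (Finset.single_le_sum
          (f := fun m => ‖α k.1 m‖ ^ 2) (fun m _ => by positivity) (Finset.mem_univ m))
      have hcB : 0 < nB k.2 := by
        rw [hnBdef]
        refine Real.sqrt_pos.mpr ?_
        obtain ⟨n, hn⟩ := hzb
        have : 0 < ‖β k.2 n‖ ^ 2 := pow_pos (norm_pos_iff.mpr hn) 2
        exact this.trans_le (Finset.single_le_sum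
          (f := fun n => ‖β k.2 n‖ ^ 2) (fun n _ => by positivity) (Finset.mem_univ n))
      set a2 : ιA' → ℂ := fun m => α k.1 m * ((nA k.1 : ℝ)⁻¹ : ℂ) with ha2def
      set b2 : ιB' → ℂ := fun n => β k.2 n * ((nB k.2 : ℝ)⁻¹ : ℂ) with hb2def
      have ha2 : ∑ m, ‖a2 m‖ ^ 2 = 1 := by
        have hn : ‖((nA k.1 : ℝ) : ℂ)⁻¹‖ ^ 2 = ((nA k.1) ^ 2)⁻¹ := by
          rw [norm_inv, Complex.norm_real, Real.norm_eq_abs,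
            abs_of_nonneg (hnA_nonneg k.1), inv_pow]
        simp only [ha2def, norm_mul, mul_pow, hn]
        rw [← Finset.sum_mul, ← hnA_sq]
        exact mul_inv_cancel₀ (pow_ne_zero 2 hcA.ne')
      have hb2 : ∑ n, ‖b2 n‖ ^ 2 = 1 := by
        have hn : ‖((nB k.2 : ℝ) : ℂ)⁻¹‖ ^ 2 = ((nB k.2) ^ 2)⁻¹ := by
          rw [norm_inv, Complex.norm_real, Real.norm_eq_abs,
            abs_of_nonneg (hnB_nonneg k.2), inv_pow]
        simp only [hb2def, norm_mul, mul_pow, hn]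
        rw [← Finset.sum_mul, ← hnB_sq]
        exact mul_inv_cancel₀ (pow_ne_zero 2 hcB.ne')
      have hmem := le_lam2 (ω := σ) ⟨a2, b2, ha2, hb2, rfl⟩
      have hvec : (fun s : ιA' × ιB' => a2 s.1 * b2 s.2)
          = fun s : ιA' × ιB' => (α k.1 s.1 * β k.2 s.2) * (((nA k.1 * nB k.2)⁻¹ : ℝ) : ℂ) := by
        funext s
        simp only [ha2def, hb2def]
        push_cast
        ring
      have hsc : (star (fun s : ιA' × ιB' => a2 s.1 * b2 s.2) ⬝ᵥ
            σ *ᵥ fun s : ιA' × ιB' => a2 s.1 * b2 s.2)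
          = ((((nA k.1 * nB k.2)⁻¹ : ℝ) ^ 2 : ℝ) : ℂ) * Ghat k k := by
        rw [hvec, qform_scale, ← hGhval]
        congr 1
        have hd : star ((((nA k.1 * nB k.2)⁻¹ : ℝ)) : ℂ)
            = ((((nA k.1 * nB k.2)⁻¹ : ℝ)) : ℂ) := by
          rw [RCLike.star_def, Complex.conj_ofReal]
        rw [hd]
        push_cast
        ring
      have hre : (star (fun s : ιA' × ιB' => a2 s.1 * b2 s.2) ⬝ᵥ
            σ *ᵥ fun s : ιA' × ιB' => a2 s.1 * b2 s.2).re
          = ((nA k.1 * nB k.2)⁻¹) ^ 2 * (Ghat k k).re := by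
        rw [hsc, Complex.re_ofReal_mul]
      rw [hre] at hmem
      have hpos : 0 < nA k.1 * nB k.2 := mul_pos hcA hcB
      rw [hcdef]
      calc (Ghat k k).re
          = (nA k.1 * nB k.2) ^ 2 * (((nA k.1 * nB k.2)⁻¹) ^ 2 * (Ghat k k).re) := by
            field_simp
        _ ≤ (nA k.1 * nB k.2) ^ 2 * lam2 σ :=
            mul_le_mul_of_nonneg_left hmem (by positivity)
        _ = lam2 σ * (nA k.1 * nB k.2) ^ 2 := mul_comm _ _
    -- Cauchy-Schwarz bound on Ghat entries
    have hCS : ∀ k k' : ιA × ιB, (Ghat k k').re ≤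
        (Real.sqrt (lam2 σ) * c k) * (Real.sqrt (lam2 σ) * c k') := by
      intro k k'
      have h2 := psd_entry_cs hGhps k k'
      have h3 : ‖Ghat k k'‖ ≤ Real.sqrt ((Ghat k k).re) * Real.sqrt ((Ghat k' k').re) := by
        calc ‖Ghat k k'‖ = Real.sqrt (‖Ghat k k'‖ ^ 2) := (Real.sqrt_sq (norm_nonneg _)).symm
          _ ≤ Real.sqrt ((Ghat k k).re * (Ghat k' k').re) := Real.sqrt_le_sqrt h2
          _ = Real.sqrt ((Ghat k k).re) * Real.sqrt ((Ghat k' k').re) :=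
              Real.sqrt_mul (hdre k) _
      have h4 : ∀ kk : ιA × ιB, Real.sqrt ((Ghat kk kk).re) ≤ Real.sqrt (lam2 σ) * c kk := by
        intro kk
        calc Real.sqrt ((Ghat kk kk).re) ≤ Real.sqrt (lam2 σ * (c kk) ^ 2) :=
              Real.sqrt_le_sqrt (hdiag kk)
          _ = Real.sqrt (lam2 σ) * c kk := by
              rw [Real.sqrt_mul hLσ, Real.sqrt_sq (hc_nonneg kk)]
      calc (Ghat k k').re ≤ ‖Ghat k k'‖ := Complex.re_le_norm _
        _ ≤ Real.sqrt ((Ghat k k).re) * Real.sqrt ((Ghat k' k').re) := h3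
        _ ≤ (Real.sqrt (lam2 σ) * c k) * (Real.sqrt (lam2 σ) * c k') :=
            mul_le_mul (h4 k) (h4 k') (Real.sqrt_nonneg _)
              (mul_nonneg (Real.sqrt_nonneg _) (hc_nonneg k))
    -- the rho-side bound
    have hstep2 : ∑ k : ιA × ιB, ∑ k' : ιA × ιB, (A k k').re * (c k * c k') ≤ lam2 ρ := by
      set aρ : ιA → ℂ := fun p1 => ∑ i, (nA i : ℂ) * u i p1 with haρdef
      set bρ : ιB → ℂ := fun p2 => ∑ j, (nB j : ℂ) * v j p2 with hbρdef
      have hna : ∑ p1, ‖aρ p1‖ ^ 2 = 1 := by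
        rw [haρdef]
        calc ∑ p1, ‖∑ i, (nA i : ℂ) * u i p1‖ ^ 2 = ∑ i, (nA i) ^ 2 := on_norm u hu nA
          _ = 1 := hnA_sum
      have hnb : ∑ p2, ‖bρ p2‖ ^ 2 = 1 := by
        rw [hbρdef]
        calc ∑ p2, ‖∑ j, (nB j : ℂ) * v j p2‖ ^ 2 = ∑ j, (nB j) ^ 2 := on_norm v hv nB
          _ = 1 := hnB_sum
      have hvec : (fun p : ιA × ιB => aρ p.1 * bρ p.2)
          = fun p : ιA × ιB => ∑ k : ιA × ιB, ((c k : ℝ) : ℂ) * (u k.1 p.1 * v k.2 p.2) := by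
        funext p
        calc aρ p.1 * bρ p.2
            = ∑ i, ∑ j, ((nA i : ℂ) * u i p.1) * ((nB j : ℂ) * v j p.2) :=
              Finset.sum_mul_sum _ _ _ _
          _ = ∑ k : ιA × ιB, ((c k : ℝ) : ℂ) * (u k.1 p.1 * v k.2 p.2) := by
              rw [Fintype.sum_prod_type]
              refine Finset.sum_congr rfl fun i _ => Finset.sum_congr rfl fun j _ => ?_
              rw [hcdef]
              push_cast
              ring
      have hqf : (star (fun p : ιA × ιB => aρ p.1 * bρ p.2) ⬝ᵥ
            ρ *ᵥ fun p : ιA × ιB => aρ p.1 * bρ p.2)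
          = ∑ k, ∑ k', ((c k : ℝ) : ℂ) * ((c k' : ℝ) : ℂ) * A k k' := by
        rw [hvec, qform_expansion ρ (fun k p => u k.1 p.1 * v k.2 p.2)
          (fun k => ((c k : ℝ) : ℂ))]
        refine Finset.sum_congr rfl fun k _ => Finset.sum_congr rfl fun k' _ => ?_
        have h1 : star ((c k : ℝ) : ℂ) = ((c k : ℝ) : ℂ) := by
          rw [RCLike.star_def, Complex.conj_ofReal]
        rw [h1]
        congr 1
        exact (hAval k k').symm
      have hre2 : (star (fun p : ιA × ιB => aρ p.1 * bρ p.2) ⬝ᵥ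
            ρ *ᵥ fun p : ιA × ιB => aρ p.1 * bρ p.2).re
          = ∑ k, ∑ k', (A k k').re * (c k * c k') := by
        rw [hqf, Complex.re_sum]
        refine Finset.sum_congr rfl fun k _ => ?_
        rw [Complex.re_sum]
        refine Finset.sum_congr rfl fun k' _ => ?_
        have h2 : ((c k : ℝ) : ℂ) * ((c k' : ℝ) : ℂ) = (((c k * c k' : ℝ)) : ℂ) := by
          push_cast; ring
        rw [h2, Complex.re_ofReal_mul]
        ring
      calc ∑ k : ιA × ιB, ∑ k' : ιA × ιB, (A k k').re * (c k * c k')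
          = (star (fun p : ιA × ιB => aρ p.1 * bρ p.2) ⬝ᵥ
              ρ *ᵥ fun p : ιA × ιB => aρ p.1 * bρ p.2).re := hre2.symm
        _ ≤ lam2 ρ := le_lam2 ⟨aρ, bρ, hna, hnb, rfl⟩
    -- final assembly
    have hfin : (star (fun p : (ιA × ιA') × (ιB × ιB') => x p.1 * y p.2) ⬝ᵥ
          tensorCut ρ σ *ᵥ fun p => x p.1 * y p.2).re
        = ∑ k, ∑ k', (A k k').re * (Ghat k k').re := by
      rw [hI, hII, Complex.re_sum]
      refine Finset.sum_congr rfl fun k _ => ?_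
      rw [Complex.re_sum]
      refine Finset.sum_congr rfl fun k' _ => ?_
      rw [Complex.mul_re, (hAnn k k').2]
      ring
    rw [hfin]
    have hss := Real.mul_self_sqrt hLσ
    calc ∑ k, ∑ k', (A k k').re * (Ghat k k').re
        ≤ ∑ k, ∑ k', (A k k').re *
            ((Real.sqrt (lam2 σ) * c k) * (Real.sqrt (lam2 σ) * c k')) :=
          Finset.sum_le_sum fun k _ => Finset.sum_le_sum fun k' _ =>
            mul_le_mul_of_nonneg_left (hCS k k') (hAnn k k').1
      _ = lam2 σ * ∑ k, ∑ k', (A k k').re * (c k * c k') := by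
          rw [Finset.mul_sum]
          refine Finset.sum_congr rfl fun k _ => ?_
          rw [Finset.mul_sum]
          refine Finset.sum_congr rfl fun k' _ => ?_
          linear_combination ((A k k').re * (c k * c k')) * hss
      _ ≤ lam2 σ * lam2 ρ := mul_le_mul_of_nonneg_left hstep2 hLσ
      _ = lam2 ρ * lam2 σ := mul_comm _ _
  · rw [lam2_eq_sSup ρ, lam2_eq_sSup σ]
    exact sSup_mul_sSup_le hLnn (lam2_nonneg hρ.1)
      (fun r hr s hs => le_lam2 (hprod r hr s hs))
end

section
/- For the Werner-Holevo channel W_{d,0} (with Choi matrix proportional to the antisymmetric projector), cv(W_{d,0}) = d/(d−1) and cv(W_{d,0} ⊗ W_{d,0}) = 2d/(d−1); in particular cv is strictly non-multiplicative, cv(W_{d,0} ⊗ W_{d,0}) > cv(W_{d,0})², whenever d ≥ 3. -/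
open scoped BigOperators Kronecker ComplexOrder
open Matrix

/-- The swap (flip) operator `F` on `ℂ^d ⊗ ℂ^d`. -/
def swapMat (d : ℕ) : Matrix (Fin d × Fin d) (Fin d × Fin d) ℂ :=
  Matrix.of fun p q => if p.1 = q.2 ∧ p.2 = q.1 then 1 else 0

noncomputable section
namespace CVWH

local notation "conj'" => starRingEnd ℂ

/-- outer product `|v⟩⟨v|`. -/
def outer {ι : Type*} (v : ι → ℂ) : Matrix ι ι ℂ :=
  Matrix.of fun p q => v p * conj' (v q)

lemma outer_posSemidef {ι : Type*} [Fintype ι] (v : ι → ℂ) :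
    (outer v).PosSemidef := by
  have h : outer v = vecMulVec v (star v) := by
    ext p q
    simp [outer, vecMulVec]
  rw [h]
  exact posSemidef_vecMulVec_self_star v
  
lemma trace_outer {ι : Type*} [Fintype ι] (v : ι → ℂ) :
    (outer v).trace = ((∑ p, ‖v p‖ ^ 2 : ℝ) : ℂ) := by
  simp only [Matrix.trace, Matrix.diag, outer, Matrix.of_apply]
  push_cast
  refine Finset.sum_congr rfl fun p _ => ?_
  rw [Complex.mul_conj']

open scoped MatrixOrder in
/-- square root of a PSD matrix (replacement for the removed Mathlib definition). -/
def _root_.Matrix.PosSemidef.sqrt {ι : Type*} [Fintype ι] [DecidableEq ι]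
    {a : Matrix ι ι ℂ} (_ha : a.PosSemidef) : Matrix ι ι ℂ :=
  CFC.sqrt a

open scoped MatrixOrder in
lemma _root_.Matrix.PosSemidef.sq_sqrt {ι : Type*} [Fintype ι] [DecidableEq ι]
    {a : Matrix ι ι ℂ} (ha : a.PosSemidef) : ha.sqrt ^ 2 = a :=
  CFC.sq_sqrt a ha.nonneg

open scoped MatrixOrder in
lemma _root_.Matrix.PosSemidef.posSemidef_sqrt {ι : Type*} [Fintype ι] [DecidableEq ι]
    {a : Matrix ι ι ℂ} (ha : a.PosSemidef) : ha.sqrt.PosSemidef :=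
  (CFC.sqrt_nonneg a).posSemidef

/-- every PSD matrix is a sum of outer products. -/
lemma psd_eq_sum_outer {ι : Type*} [Fintype ι] [DecidableEq ι]
    {a : Matrix ι ι ℂ} (ha : a.PosSemidef) :
    a = ∑ k, outer (fun p => ha.sqrt p k) := by
  have h2 : ha.sqrt * ha.sqrt = a := by
    have := ha.sq_sqrt
    rwa [pow_two] at this
  ext p q
  conv_lhs => rw [← h2]
  simp only [Matrix.mul_apply, Matrix.sum_apply, outer, Matrix.of_apply]
  refine Finset.sum_congr rfl fun k _ => ?_
  congr 1
  have hh := ha.posSemidef_sqrt.isHermitian.apply k q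
  rw [← hh]
  rfl

lemma trace_mul_eq {ι : Type*} [Fintype ι] (A B : Matrix ι ι ℂ) :
    (A * B).trace = ∑ p, ∑ q, A p q * B q p := by
  simp [Matrix.trace, Matrix.diag, Matrix.mul_apply]

lemma trace_of_ptraceA {ιA ιB : Type*} [Fintype ιA] [Fintype ιB] [DecidableEq ιB]
    {Ω : Matrix (ιA × ιB) (ιA × ιB) ℂ} (hpt : ptraceA Ω = 1) :
    Ω.trace = (Fintype.card ιB : ℂ) := by
  have h : ∀ k l, ∑ i, Ω (i, k) (i, l) = if k = l then 1 else 0 := by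
    intro k l
    have := congrFun (congrFun hpt k) l
    simpa [ptraceA, Matrix.one_apply] using this
  calc Ω.trace = ∑ i : ιA, ∑ k : ιB, Ω (i, k) (i, k) := by
        rw [Matrix.trace, Fintype.sum_prod_type]
        rfl
    _ = ∑ k : ιB, ∑ i : ιA, Ω (i, k) (i, k) := Finset.sum_comm
    _ = ∑ _k : ιB, (1 : ℂ) := by
        refine Finset.sum_congr rfl fun k _ => ?_
        rw [h k k]
        simp
    _ = (Fintype.card ιB : ℂ) := by
        rw [Finset.sum_const, Finset.card_univ]
        simp

lemma kron_quad {ιA ιB : Type*} [Fintype ιA] [Fintype ιB]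
    (u : ιA → ℂ) (v : ιB → ℂ) (J : Matrix (ιA × ιB) (ιA × ιB) ℂ) :
    ((outer u ⊗ₖ outer v) * J).trace
      = star (fun p : ιA × ιB => u p.1 * v p.2) ⬝ᵥ J *ᵥ (fun p : ιA × ιB => u p.1 * v p.2) := by
  rw [trace_mul_eq]
  simp only [dotProduct, mulVec, Pi.star_apply, Finset.mul_sum]
  rw [Finset.sum_comm]
  refine Finset.sum_congr rfl fun p _ => Finset.sum_congr rfl fun q _ => ?_
  simp only [kroneckerMap_apply, outer, Matrix.of_apply, Complex.star_def, _root_.map_mul]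
  ring

lemma sep_trace_le {ιA ιB : Type*} [Fintype ιA] [Fintype ιB] [DecidableEq ιA] [DecidableEq ιB]
    (J : Matrix (ιA × ιB) (ιA × ιB) ℂ) (lam : ℝ)
    (h : ∀ (u : ιA → ℂ) (v : ιB → ℂ),
      ((star (fun p : ιA × ιB => u p.1 * v p.2)) ⬝ᵥ J *ᵥ (fun p : ιA × ιB => u p.1 * v p.2)).re
        ≤ lam * ((∑ i, ‖u i‖ ^ 2) * (∑ k, ‖v k‖ ^ 2)))
    {Ω : Matrix (ιA × ιB) (ιA × ιB) ℂ} (hsep : IsSep Ω) (hpt : ptraceA Ω = 1) :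
    ((Ω * J).trace).re ≤ lam * Fintype.card ιB := by
  obtain ⟨n, a, b, ha, hb, rfl⟩ := hsep
  set c : Fin n → ιA → ιA → ℂ := fun i k x => (ha i).sqrt x k with hc
  set f : Fin n → ιB → ιB → ℂ := fun i l y => (hb i).sqrt y l with hf
  set ta : Fin n → ℝ := fun i => ∑ k, ∑ x, ‖c i k x‖ ^ 2 with hta
  set tb : Fin n → ℝ := fun i => ∑ l, ∑ y, ‖f i l y‖ ^ 2 with htb
  have hka : ∀ i, a i = ∑ k, outer (c i k) := fun i => psd_eq_sum_outer (ha i)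
  have hkb : ∀ i, b i = ∑ l, outer (f i l) := fun i => psd_eq_sum_outer (hb i)
  have hsplit : ∀ i, a i ⊗ₖ b i = ∑ k, ∑ l, (outer (c i k) ⊗ₖ outer (f i l)) := by
    intro i
    ext p q
    rw [hka i, hkb i]
    simp only [kroneckerMap_apply, Matrix.sum_apply]
    rw [Finset.sum_mul]
    exact Finset.sum_congr rfl fun k _ => by rw [Finset.mul_sum]
  have htra : ∀ i, (a i).trace = ((ta i : ℝ) : ℂ) := by
    intro i
    rw [hka i, Matrix.trace_sum,
      show ((ta i : ℝ) : ℂ) = ∑ k, ((∑ x, ‖c i k x‖ ^ 2 : ℝ) : ℂ) by simp only [hta]; exact Complex.ofReal_sum _ _]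
    exact Finset.sum_congr rfl fun k _ => trace_outer _
  have htrb : ∀ i, (b i).trace = ((tb i : ℝ) : ℂ) := by
    intro i
    rw [hkb i, Matrix.trace_sum,
      show ((tb i : ℝ) : ℂ) = ∑ l, ((∑ y, ‖f i l y‖ ^ 2 : ℝ) : ℂ) by simp only [htb]; exact Complex.ofReal_sum _ _]
    exact Finset.sum_congr rfl fun l _ => trace_outer _
  have hsum : (∑ i, ta i * tb i) = (Fintype.card ιB : ℝ) := by
    have h1 : (∑ i, a i ⊗ₖ b i).trace = (Fintype.card ιB : ℂ) := trace_of_ptraceA hpt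
    rw [Matrix.trace_sum] at h1
    have h2 : ∀ i, (a i ⊗ₖ b i).trace = ((ta i * tb i : ℝ) : ℂ) := by
      intro i
      rw [Matrix.trace_kronecker, htra i, htrb i]
      push_cast
      ring
    rw [Finset.sum_congr rfl fun i _ => h2 i] at h1
    exact_mod_cast h1
  have hbound : ∀ i, ((a i ⊗ₖ b i) * J).trace.re ≤ lam * (ta i * tb i) := by
    intro i
    rw [hsplit i, Matrix.sum_mul, Matrix.trace_sum, Complex.re_sum]
    have : ∀ k, ((∑ l, outer (c i k) ⊗ₖ outer (f i l)) * J).trace.re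
        ≤ ∑ l, lam * ((∑ x, ‖c i k x‖ ^ 2) * (∑ y, ‖f i l y‖ ^ 2)) := by
      intro k
      rw [Matrix.sum_mul, Matrix.trace_sum, Complex.re_sum]
      refine Finset.sum_le_sum fun l _ => ?_
      rw [kron_quad]
      exact h (c i k) (f i l)
    calc (∑ k, ((∑ l, outer (c i k) ⊗ₖ outer (f i l)) * J).trace.re)
        ≤ ∑ k, ∑ l, lam * ((∑ x, ‖c i k x‖ ^ 2) * (∑ y, ‖f i l y‖ ^ 2)) :=
          Finset.sum_le_sum fun k _ => this k
      _ = lam * (ta i * tb i) := by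
          rw [hta, htb, Finset.sum_mul_sum, Finset.mul_sum]
          exact Finset.sum_congr rfl fun k _ => by rw [Finset.mul_sum]
  calc ((∑ i, a i ⊗ₖ b i) * J).trace.re = ∑ i, ((a i ⊗ₖ b i) * J).trace.re := by
        rw [Matrix.sum_mul, Matrix.trace_sum, Complex.re_sum]
    _ ≤ ∑ i, lam * (ta i * tb i) := Finset.sum_le_sum fun i _ => hbound i
    _ = lam * (Fintype.card ιB : ℝ) := by rw [← Finset.mul_sum, hsum]


variable {ι : Type*} [Fintype ι] [DecidableEq ι]

def gswap (ι : Type*) [DecidableEq ι] : Matrix (ι × ι) (ι × ι) ℂ :=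
  Matrix.of fun p q => if p.1 = q.2 ∧ p.2 = q.1 then 1 else 0

def gW (ι : Type*) [DecidableEq ι] : Matrix (ι × ι) (ι × ι) ℂ :=
  (1 : Matrix (ι × ι) (ι × ι) ℂ) - gswap ι

def gWT (ι : Type*) [DecidableEq ι] :
    Matrix ((ι × ι) × ι × ι) ((ι × ι) × ι × ι) ℂ :=
  Matrix.of fun Q P =>
    gW ι (Q.1.1, Q.2.1) (P.1.1, P.2.1) * gW ι (Q.1.2, Q.2.2) (P.1.2, P.2.2)

/-- product vector -/
def wv {ιA ιB : Type*} (u : ιA → ℂ) (v : ιB → ℂ) : ιA × ιB → ℂ :=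
  fun p => u p.1 * v p.2

lemma gW_mulVec (φ : ι × ι → ℂ) (q : ι × ι) :
    (gW ι *ᵥ φ) q = φ q - φ (q.2, q.1) := by
  simp only [gW, gswap, mulVec, dotProduct, Matrix.sub_apply, Matrix.one_apply,
    Matrix.of_apply, sub_mul, ite_mul, one_mul, zero_mul, Finset.sum_sub_distrib,
    Fintype.sum_prod_type, ite_and, Finset.sum_ite_eq, Finset.sum_ite_eq',
    Finset.mem_univ, if_true, Prod.mk.injEq]

/-- regrouping equivalence on `(ι×ι)×(ι×ι)`. -/
def σp (ι : Type*) : ((ι × ι) × ι × ι) ≃ ((ι × ι) × ι × ι) where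
  toFun P := ((P.1.1, P.2.1), (P.1.2, P.2.2))
  invFun P := ((P.1.1, P.2.1), (P.1.2, P.2.2))
  left_inv P := rfl
  right_inv P := rfl

lemma gWT_mulVec (φ : (ι × ι) × ι × ι → ℂ) (Q : (ι × ι) × ι × ι) :
    (gWT ι *ᵥ φ) Q
      = φ Q - φ ((Q.1.1, Q.2.2), (Q.2.1, Q.1.2))
        - φ ((Q.2.1, Q.1.2), (Q.1.1, Q.2.2)) + φ (Q.2, Q.1) := by
  have h1 : (gWT ι *ᵥ φ) Q
      = ∑ r : ι × ι, gW ι (Q.1.1, Q.2.1) r *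
          ((gW ι *ᵥ fun s => φ ((r.1, s.1), (r.2, s.2))) (Q.1.2, Q.2.2)) := by
    show (∑ P : (ι × ι) × ι × ι, gWT ι Q P * φ P) = _
    rw [Fintype.sum_equiv (σp ι) _
      (fun R => gW ι (Q.1.1, Q.2.1) R.1 *
        (gW ι (Q.1.2, Q.2.2) R.2 * φ ((R.1.1, R.2.1), (R.1.2, R.2.2))))
      (fun P => by simp [gWT, σp, mul_assoc])]
    rw [Fintype.sum_prod_type]
    refine Finset.sum_congr rfl fun r _ => ?_
    simp only [mulVec, dotProduct, Finset.mul_sum]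
  rw [h1]
  have h2 : ∀ r : ι × ι,
      (gW ι *ᵥ fun s => φ ((r.1, s.1), (r.2, s.2))) (Q.1.2, Q.2.2)
        = φ ((r.1, Q.1.2), (r.2, Q.2.2)) - φ ((r.1, Q.2.2), (r.2, Q.1.2)) := fun r =>
    gW_mulVec _ _
  rw [Finset.sum_congr rfl fun r _ => by rw [h2 r]]
  have h3 : (∑ r : ι × ι, gW ι (Q.1.1, Q.2.1) r *
      (φ ((r.1, Q.1.2), (r.2, Q.2.2)) - φ ((r.1, Q.2.2), (r.2, Q.1.2))))
      = (gW ι *ᵥ fun r : ι × ι =>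
          (φ ((r.1, Q.1.2), (r.2, Q.2.2)) - φ ((r.1, Q.2.2), (r.2, Q.1.2)))) (Q.1.1, Q.2.1) :=
    rfl
  rw [h3, gW_mulVec]
  ring

lemma quad_gW (u v : ι → ℂ) :
    star (wv u v) ⬝ᵥ gW ι *ᵥ wv u v
      = (∑ i, conj' (u i) * u i) * (∑ k, conj' (v k) * v k)
        - (∑ i, conj' (u i) * v i) * (∑ k, conj' (v k) * u k) := by
  have hmv : ∀ q : ι × ι, (gW ι *ᵥ wv u v) q = wv u v q - wv u v (q.2, q.1) := by
    intro q
    simp only [gW, gswap, mulVec, dotProduct, Matrix.sub_apply, Matrix.one_apply,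
      Matrix.of_apply, sub_mul, ite_mul, one_mul, zero_mul, Finset.sum_sub_distrib,
      Fintype.sum_prod_type, ite_and, Finset.sum_ite_eq, Finset.sum_ite_eq',
      Finset.mem_univ, if_true, Prod.mk.injEq]
  calc star (wv u v) ⬝ᵥ gW ι *ᵥ wv u v
      = ∑ q : ι × ι, conj' (wv u v q) * (wv u v q - wv u v (q.2, q.1)) := by
        simp only [dotProduct, Pi.star_apply, Complex.star_def]
        exact Finset.sum_congr rfl fun q _ => by rw [hmv q]
    _ = (∑ q : ι × ι, conj' (wv u v q) * wv u v q)
        - ∑ q : ι × ι, conj' (wv u v q) * wv u v (q.2, q.1) := by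
        rw [← Finset.sum_sub_distrib]
        exact Finset.sum_congr rfl fun q _ => by ring
    _ = _ := by
        rw [Finset.sum_mul_sum, Finset.sum_mul_sum]
        rw [Fintype.sum_prod_type, Fintype.sum_prod_type]
        refine congrArg₂ (· - ·) ?_ ?_ <;>
          refine Finset.sum_congr rfl fun i _ => Finset.sum_congr rfl fun k _ => ?_ <;>
            simp only [wv, _root_.map_mul] <;> ring

lemma r3 (F : ι → ι → ι → ℂ) :
    (∑ a, ∑ c, ∑ e, F a c e) = ∑ e, ∑ c, ∑ a, F a c e := by
  have h1 : (∑ a, ∑ c, ∑ e, F a c e) = ∑ c, ∑ a, ∑ e, F a c e := Finset.sum_comm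
  have h2 : ∀ c, (∑ a, ∑ e, F a c e) = ∑ e, ∑ a, F a c e := fun c => Finset.sum_comm
  have h3 : (∑ c, ∑ e, ∑ a, F a c e) = ∑ e, ∑ c, ∑ a, F a c e := Finset.sum_comm
  rw [h1, Finset.sum_congr rfl fun c _ => h2 c, h3]

lemma reorder1 (F : ι → ι → ι → ι → ℂ) :
    (∑ a, ∑ b, ∑ c, ∑ e, F a b c e) = ∑ a, ∑ c, ∑ e, ∑ b, F a b c e := by
  refine Finset.sum_congr rfl fun a _ => ?_
  have h1 : (∑ b, ∑ c, ∑ e, F a b c e) = ∑ c, ∑ b, ∑ e, F a b c e := Finset.sum_comm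
  have h2 : ∀ c, (∑ b, ∑ e, F a b c e) = ∑ e, ∑ b, F a b c e := fun c => Finset.sum_comm
  rw [h1, Finset.sum_congr rfl fun c _ => h2 c]

lemma reorder2 (F : ι → ι → ι → ι → ℂ) :
    (∑ a, ∑ b, ∑ c, ∑ e, F a b c e) = ∑ b, ∑ e, ∑ c, ∑ a, F a b c e := by
  have h1 : (∑ a, ∑ b, ∑ c, ∑ e, F a b c e) = ∑ b, ∑ a, ∑ c, ∑ e, F a b c e :=
    Finset.sum_comm
  rw [h1]
  exact Finset.sum_congr rfl fun b _ => r3 (fun a c e => F a b c e)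

lemma quad_gWT (u v : ι × ι → ℂ) :
    star (wv u v) ⬝ᵥ gWT ι *ᵥ wv u v
      = (∑ p, conj' (u p) * u p) * (∑ p, conj' (v p) * v p)
        - (∑ k, ∑ l, (∑ i, u (k, i) * conj' (v (l, i))) * (∑ j, conj' (u (k, j)) * v (l, j)))
        - (∑ k, ∑ l, (∑ i, u (i, k) * conj' (v (i, l))) * (∑ j, conj' (u (j, k)) * v (j, l)))
        + (∑ p, conj' (u p) * v p) * (∑ p, conj' (v p) * u p) := by
  have hmv : ∀ Q : (ι × ι) × ι × ι,
      (gWT ι *ᵥ wv u v) Q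
        = wv u v Q - wv u v ((Q.1.1, Q.2.2), (Q.2.1, Q.1.2))
          - wv u v ((Q.2.1, Q.1.2), (Q.1.1, Q.2.2)) + wv u v (Q.2, Q.1) := by
    intro Q
    exact gWT_mulVec _ Q
  calc star (wv u v) ⬝ᵥ gWT ι *ᵥ wv u v
      = (∑ Q : (ι × ι) × ι × ι, conj' (wv u v Q) * wv u v Q)
        - (∑ Q : (ι × ι) × ι × ι, conj' (wv u v Q) * wv u v ((Q.1.1, Q.2.2), (Q.2.1, Q.1.2)))
        - (∑ Q : (ι × ι) × ι × ι, conj' (wv u v Q) * wv u v ((Q.2.1, Q.1.2), (Q.1.1, Q.2.2)))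
        + (∑ Q : (ι × ι) × ι × ι, conj' (wv u v Q) * wv u v (Q.2, Q.1)) := by
        simp only [dotProduct, Pi.star_apply, Complex.star_def]
        rw [← Finset.sum_sub_distrib, ← Finset.sum_sub_distrib, ← Finset.sum_add_distrib]
        refine Finset.sum_congr rfl fun Q _ => ?_
        rw [hmv Q]
        ring
    _ = _ := by
        refine congrArg₂ (· + ·) (congrArg₂ (· - ·) (congrArg₂ (· - ·) ?_ ?_) ?_) ?_
        · -- S1
          rw [Finset.sum_mul_sum, Fintype.sum_prod_type]
          refine Finset.sum_congr rfl fun qa _ => Finset.sum_congr rfl fun qb _ => ?_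
          simp only [wv, _root_.map_mul]
          ring
        · -- S2
          have hx : ∀ (k l : ι),
              (∑ i, u (k, i) * conj' (v (l, i))) * (∑ j, conj' (u (k, j)) * v (l, j))
                = ∑ i, ∑ j, u (k, i) * conj' (v (l, i)) * (conj' (u (k, j)) * v (l, j)) := by
            intro k l
            rw [Finset.sum_mul_sum]
          calc (∑ Q : (ι × ι) × ι × ι, conj' (wv u v Q) * wv u v ((Q.1.1, Q.2.2), (Q.2.1, Q.1.2)))
              = ∑ a, ∑ a', ∑ b, ∑ b',
                  conj' (u (a, a') * v (b, b')) * (u (a, b') * v (b, a')) := by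
                simp only [Fintype.sum_prod_type]
                rfl
            _ = ∑ a, ∑ b, ∑ b', ∑ a',
                  conj' (u (a, a') * v (b, b')) * (u (a, b') * v (b, a')) :=
                reorder1 _
            _ = _ := by
                refine Finset.sum_congr rfl fun k _ => Finset.sum_congr rfl fun l _ => ?_
                rw [hx k l]
                refine Finset.sum_congr rfl fun i _ => Finset.sum_congr rfl fun j _ => ?_
                simp only [_root_.map_mul]
                ring
        · -- S3
          have hx : ∀ (k l : ι),
              (∑ i, u (i, k) * conj' (v (i, l))) * (∑ j, conj' (u (j, k)) * v (j, l))
                = ∑ i, ∑ j, u (i, k) * conj' (v (i, l)) * (conj' (u (j, k)) * v (j, l)) := by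
            intro k l
            rw [Finset.sum_mul_sum]
          calc (∑ Q : (ι × ι) × ι × ι, conj' (wv u v Q) * wv u v ((Q.2.1, Q.1.2), (Q.1.1, Q.2.2)))
              = ∑ a, ∑ a', ∑ b, ∑ b',
                  conj' (u (a, a') * v (b, b')) * (u (b, a') * v (a, b')) := by
                simp only [Fintype.sum_prod_type]
                rfl
            _ = ∑ a', ∑ b', ∑ b, ∑ a,
                  conj' (u (a, a') * v (b, b')) * (u (b, a') * v (a, b')) :=
                reorder2 _
            _ = _ := by
                refine Finset.sum_congr rfl fun k _ => Finset.sum_congr rfl fun l _ => ?_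
                rw [hx k l]
                refine Finset.sum_congr rfl fun i _ => Finset.sum_congr rfl fun j _ => ?_
                simp only [_root_.map_mul]
                ring
        · -- S4
          rw [Finset.sum_mul_sum, Fintype.sum_prod_type]
          refine Finset.sum_congr rfl fun qa _ => Finset.sum_congr rfl fun qb _ => ?_
          simp only [wv, _root_.map_mul]
          ring

lemma sum_conj_mul {κ : Type*} [Fintype κ] (u : κ → ℂ) :
    (∑ i, conj' (u i) * u i) = ((∑ i, ‖u i‖ ^ 2 : ℝ) : ℂ) := by
  rw [Complex.ofReal_sum]
  refine Finset.sum_congr rfl fun i _ => ?_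
  rw [Complex.conj_mul']
  norm_cast

lemma conj_sum_mul {κ : Type*} [Fintype κ] (u v : κ → ℂ) :
    (∑ i, conj' (v i) * u i) = conj' (∑ i, conj' (u i) * v i) := by
  rw [map_sum]
  refine Finset.sum_congr rfl fun i _ => ?_
  rw [_root_.map_mul, Complex.conj_conj]
  ring

lemma norm_sq_sum_le_card {κ : Type*} [Fintype κ] (f : κ → ℂ) :
    ‖∑ k, f k‖ ^ 2 ≤ (Fintype.card κ : ℝ) * ∑ k, ‖f k‖ ^ 2 := by
  have h1 : ‖∑ k, f k‖ ≤ ∑ k, ‖f k‖ := norm_sum_le _ _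
  have h2 : (∑ k, ‖f k‖) ^ 2 ≤ (∑ k : κ, (1 : ℝ) ^ 2) * ∑ k, ‖f k‖ ^ 2 := by
    have := Finset.sum_mul_sq_le_sq_mul_sq Finset.univ (fun _ : κ => (1 : ℝ)) fun k => ‖f k‖
    simpa using this
  have h3 : (∑ _k : κ, (1 : ℝ) ^ 2) = Fintype.card κ := by simp
  calc ‖∑ k, f k‖ ^ 2 ≤ (∑ k, ‖f k‖) ^ 2 := by
        apply pow_le_pow_left₀ (norm_nonneg _) h1
    _ ≤ _ := by rw [← h3]; exact h2

lemma norm_sq_inner_le {κ : Type*} [Fintype κ] (u v : κ → ℂ) :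
    ‖∑ p, conj' (u p) * v p‖ ^ 2 ≤ (∑ p, ‖u p‖ ^ 2) * (∑ p, ‖v p‖ ^ 2) := by
  have h1 : ‖∑ p, conj' (u p) * v p‖ ≤ ∑ p, ‖u p‖ * ‖v p‖ := by
    refine (norm_sum_le _ _).trans (le_of_eq (Finset.sum_congr rfl fun p _ => ?_))
    rw [norm_mul, RCLike.norm_conj]
  have h2 : (∑ p, ‖u p‖ * ‖v p‖) ^ 2 ≤ (∑ p, ‖u p‖ ^ 2) * ∑ p, ‖v p‖ ^ 2 :=
    Finset.sum_mul_sq_le_sq_mul_sq Finset.univ _ _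
  calc ‖∑ p, conj' (u p) * v p‖ ^ 2 ≤ (∑ p, ‖u p‖ * ‖v p‖) ^ 2 :=
        pow_le_pow_left₀ (norm_nonneg _) h1 2
    _ ≤ _ := h2

lemma quad_gW_re_le (u v : ι → ℂ) :
    (star (wv u v) ⬝ᵥ gW ι *ᵥ wv u v).re ≤ (∑ i, ‖u i‖ ^ 2) * (∑ k, ‖v k‖ ^ 2) := by
  rw [quad_gW, sum_conj_mul u, sum_conj_mul v, conj_sum_mul u v, Complex.mul_conj]
  simp only [Complex.sub_re, Complex.mul_re, Complex.ofReal_re, Complex.ofReal_im,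
    mul_zero, zero_mul, sub_zero, Complex.normSq_eq_norm_sq]
  have : (0 : ℝ) ≤ ‖∑ i, conj' (u i) * v i‖ ^ 2 := by positivity
  linarith

lemma quad_gWT_re_le (hcard : 2 ≤ Fintype.card ι) (u v : ι × ι → ℂ) :
    (star (wv u v) ⬝ᵥ gWT ι *ᵥ wv u v).re
      ≤ (2 * ((Fintype.card ι : ℝ) - 1) / (Fintype.card ι : ℝ))
          * ((∑ p, ‖u p‖ ^ 2) * (∑ p, ‖v p‖ ^ 2)) := by
  set n : ℝ := (Fintype.card ι : ℝ) with hn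
  have hn2 : (2 : ℝ) ≤ n := by rw [hn]; exact_mod_cast hcard
  have hn0 : (0 : ℝ) < n := by linarith
  set M : ι → ι → ℂ := fun k l => ∑ i, u (k, i) * conj' (v (l, i)) with hM
  set M' : ι → ι → ℂ := fun k l => ∑ i, u (i, k) * conj' (v (i, l)) with hM'
  set z : ℂ := ∑ p, conj' (u p) * v p with hz
  set Su : ℝ := ∑ p, ‖u p‖ ^ 2 with hSu
  set Sv : ℝ := ∑ p, ‖v p‖ ^ 2 with hSv
  set X : ℝ := ∑ k, ∑ l, ‖M k l‖ ^ 2 with hX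
  set Y : ℝ := ∑ k, ∑ l, ‖M' k l‖ ^ 2 with hY
  have key : (star (wv u v) ⬝ᵥ gWT ι *ᵥ wv u v).re = Su * Sv - X - Y + ‖z‖ ^ 2 := by
    rw [quad_gWT]
    have e1 : (∑ p, conj' (u p) * u p) = ((Su : ℝ) : ℂ) := sum_conj_mul u
    have e2 : (∑ p, conj' (v p) * v p) = ((Sv : ℝ) : ℂ) := sum_conj_mul v
    have e3 : (∑ k, ∑ l, (∑ i, u (k, i) * conj' (v (l, i))) * (∑ j, conj' (u (k, j)) * v (l, j)))
        = ((X : ℝ) : ℂ) := by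
      rw [hX, Complex.ofReal_sum]
      refine Finset.sum_congr rfl fun k _ => ?_
      rw [Complex.ofReal_sum]
      refine Finset.sum_congr rfl fun l _ => ?_
      have : (∑ j, conj' (u (k, j)) * v (l, j)) = conj' (M k l) := by
        rw [hM, map_sum]
        refine Finset.sum_congr rfl fun j _ => ?_
        rw [_root_.map_mul, Complex.conj_conj]
      rw [this, Complex.mul_conj']
      norm_cast
    have e4 : (∑ k, ∑ l, (∑ i, u (i, k) * conj' (v (i, l))) * (∑ j, conj' (u (j, k)) * v (j, l)))
        = ((Y : ℝ) : ℂ) := by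
      rw [hY, Complex.ofReal_sum]
      refine Finset.sum_congr rfl fun k _ => ?_
      rw [Complex.ofReal_sum]
      refine Finset.sum_congr rfl fun l _ => ?_
      have : (∑ j, conj' (u (j, k)) * v (j, l)) = conj' (M' k l) := by
        rw [hM', map_sum]
        refine Finset.sum_congr rfl fun j _ => ?_
        rw [_root_.map_mul, Complex.conj_conj]
      rw [this, Complex.mul_conj']
      norm_cast
    have e5 : (∑ p, conj' (u p) * v p) * (∑ p, conj' (v p) * u p)
        = ((‖z‖ ^ 2 : ℝ) : ℂ) := by
      rw [conj_sum_mul u v, ← hz, Complex.mul_conj']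
      norm_cast
    rw [e1, e2, e3, e4, e5, ← Complex.ofReal_mul, ← Complex.ofReal_sub,
      ← Complex.ofReal_sub, ← Complex.ofReal_add, Complex.ofReal_re]
  rw [key]
  have hdiagM : conj' z = ∑ k, M k k := by
    rw [hz, map_sum, hM, Fintype.sum_prod_type]
    refine Finset.sum_congr rfl fun k _ => Finset.sum_congr rfl fun i _ => ?_
    rw [_root_.map_mul, Complex.conj_conj]
  have hdiagM' : conj' z = ∑ k, M' k k := by
    rw [hz, map_sum, hM', Fintype.sum_prod_type]
    rw [Finset.sum_comm]
    refine Finset.sum_congr rfl fun k _ => Finset.sum_congr rfl fun i _ => ?_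
    rw [_root_.map_mul, Complex.conj_conj]
  have hdiagX : (∑ k, ‖M k k‖ ^ 2) ≤ X := by
    rw [hX]
    refine Finset.sum_le_sum fun k _ => ?_
    exact Finset.single_le_sum (f := fun l => ‖M k l‖ ^ 2) (fun l _ => by positivity)
      (Finset.mem_univ k)
  have hdiagY : (∑ k, ‖M' k k‖ ^ 2) ≤ Y := by
    rw [hY]
    refine Finset.sum_le_sum fun k _ => ?_
    exact Finset.single_le_sum (f := fun l => ‖M' k l‖ ^ 2) (fun l _ => by positivity)
      (Finset.mem_univ k)
  have hzX : ‖z‖ ^ 2 ≤ n * X := by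
    have h0 : ‖z‖ = ‖∑ k, M k k‖ := by rw [← hdiagM, RCLike.norm_conj]
    rw [h0]
    calc ‖∑ k, M k k‖ ^ 2 ≤ n * ∑ k, ‖M k k‖ ^ 2 := norm_sq_sum_le_card _
      _ ≤ n * X := by nlinarith [hdiagX]
  have hzY : ‖z‖ ^ 2 ≤ n * Y := by
    have h0 : ‖z‖ = ‖∑ k, M' k k‖ := by rw [← hdiagM', RCLike.norm_conj]
    rw [h0]
    calc ‖∑ k, M' k k‖ ^ 2 ≤ n * ∑ k, ‖M' k k‖ ^ 2 := norm_sq_sum_le_card _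
      _ ≤ n * Y := by nlinarith [hdiagY]
  have hzS : ‖z‖ ^ 2 ≤ Su * Sv := norm_sq_inner_le u v
  have hz0 : (0 : ℝ) ≤ ‖z‖ ^ 2 := by positivity
  rw [div_mul_eq_mul_div, le_div_iff₀ hn0]
  nlinarith [hzX, hzY, hzS, hz0, hn2]

section zeta

/-- primitive d-th root of unity -/
def ζd (d : ℕ) : ℂ := Complex.exp (2 * Real.pi * Complex.I / d)

lemma zeta_prim (d : ℕ) (hd : d ≠ 0) : IsPrimitiveRoot (ζd d) d :=
  Complex.isPrimitiveRoot_exp d hd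

lemma zeta_norm (d : ℕ) : ‖ζd d‖ = 1 := by
  have h : (2 * (Real.pi : ℂ) * Complex.I / d) = ((2 * Real.pi / d : ℝ) : ℂ) * Complex.I := by
    push_cast
    ring
  rw [ζd, h, Complex.norm_exp_ofReal_mul_I]

lemma zeta_conj_mul (d : ℕ) (k : ℕ) : conj' (ζd d ^ k) * ζd d ^ k = 1 := by
  rw [Complex.conj_mul', norm_pow, zeta_norm d]
  norm_num

lemma zeta_ne_zero (d : ℕ) : ζd d ≠ 0 := Complex.exp_ne_zero _

lemma zeta_conj (d : ℕ) (k : ℕ) : conj' (ζd d ^ k) = (ζd d ^ k)⁻¹ :=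
  eq_inv_of_mul_eq_one_left (zeta_conj_mul d k)

lemma zeta_sum (d : ℕ) (hd : 0 < d) (a c : Fin d) :
    (∑ m : Fin d, ζd d ^ (m.val * a.val) * conj' (ζd d ^ (m.val * c.val)))
      = if a = c then (d : ℂ) else 0 := by
  have hterm : ∀ m : Fin d, ζd d ^ (m.val * a.val) * conj' (ζd d ^ (m.val * c.val))
      = (ζd d ^ a.val * (ζd d ^ c.val)⁻¹) ^ m.val := by
    intro m
    rw [zeta_conj, mul_pow, ← inv_pow, pow_mul' _ m.val a.val, pow_mul' _ m.val c.val, inv_pow]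
  rw [Finset.sum_congr rfl fun m _ => hterm m]
  rw [Fin.sum_univ_eq_sum_range (fun i => (ζd d ^ a.val * (ζd d ^ c.val)⁻¹) ^ i) d]
  by_cases hac : a = c
  · subst hac
    rw [mul_inv_cancel₀ (pow_ne_zero _ (zeta_ne_zero d))]
    simp
  · have hx1 : ζd d ^ a.val * (ζd d ^ c.val)⁻¹ ≠ 1 := by
      intro h
      rw [mul_inv_eq_one₀ (pow_ne_zero _ (zeta_ne_zero d))] at h
      exact hac (Fin.ext ((zeta_prim d hd.ne').pow_inj a.isLt c.isLt h))
    rw [geom_sum_eq hx1]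
    have h1 : (ζd d ^ a.val) ^ d = 1 := by
      rw [← pow_mul, mul_comm, pow_mul, (zeta_prim d hd.ne').pow_eq_one, one_pow]
    have h2 : (ζd d ^ c.val) ^ d = 1 := by
      rw [← pow_mul, mul_comm, pow_mul, (zeta_prim d hd.ne').pow_eq_one, one_pow]
    have hxd : (ζd d ^ a.val * (ζd d ^ c.val)⁻¹) ^ d = 1 := by
      rw [mul_pow, h1, inv_pow, h2, inv_one, one_mul]
    rw [hxd]
    simp [hac]

end zeta

section bvec

variable (d : ℕ) [NeZero d]

/-- (unnormalized) maximally entangled basis vectors -/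
def bvec (m n : Fin d) : Fin d × Fin d → ℂ :=
  fun p => ζd d ^ (m.val * p.1.val) * (if p.2 = p.1 + n then 1 else 0)

lemma bvec_rowsum (m n : Fin d) (k l : Fin d) :
    (∑ i, bvec d m n (k, i) * conj' (bvec d m n (l, i)))
      = if k = l then 1 else 0 := by
  have hstep : ∀ i : Fin d,
      bvec d m n (k, i) * conj' (bvec d m n (l, i))
        = if i = k + n then
            (if i = l + n then ζd d ^ (m.val * k.val) * conj' (ζd d ^ (m.val * l.val)) else 0)
          else 0 := by
    intro i
    simp only [bvec, _root_.map_mul, apply_ite conj', _root_.map_one, _root_.map_zero]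
    by_cases h1 : i = k + n <;> by_cases h2 : i = l + n <;> simp [h1, h2] <;> ring
  rw [Finset.sum_congr rfl fun i _ => hstep i, Finset.sum_ite_eq' Finset.univ (k + n)]
  simp only [Finset.mem_univ, if_true]
  by_cases hkl : k = l
  · subst hkl
    simp only [if_pos rfl, if_pos trivial]
    rw [mul_comm]
    exact zeta_conj_mul d _
  · have hne : k + n ≠ l + n := fun h => hkl (by simpa using h)
    simp [hne, hkl]

lemma bvec_colsum (m n : Fin d) (k l : Fin d) :
    (∑ i, bvec d m n (i, k) * conj' (bvec d m n (i, l)))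
      = if k = l then 1 else 0 := by
  have hstep : ∀ i : Fin d,
      bvec d m n (i, k) * conj' (bvec d m n (i, l))
        = if i = k - n then (if i = l - n then (1 : ℂ) else 0) else 0 := by
    intro i
    simp only [bvec, _root_.map_mul, apply_ite conj', _root_.map_one, _root_.map_zero]
    have e1 : (k = i + n) ↔ (i = k - n) := by
      constructor
      · intro h; rw [h]; simp
      · intro h; rw [h]; simp
    have e2 : (l = i + n) ↔ (i = l - n) := by
      constructor
      · intro h; rw [h]; simp
      · intro h; rw [h]; simp
    by_cases h1 : i = k - n <;> by_cases h2 : i = l - n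
    · rw [if_pos (e1.mpr h1), if_pos (e2.mpr h2), if_pos h1, if_pos h2]
      rw [show ζd d ^ (m.val * i.val) * 1 * (conj' (ζd d ^ (m.val * i.val)) * 1)
        = conj' (ζd d ^ (m.val * i.val)) * ζd d ^ (m.val * i.val) by ring, zeta_conj_mul d]
    · rw [if_neg (fun h => h2 (e2.mp h)), if_pos h1, if_neg h2]
      ring
    · rw [if_neg (fun h => h1 (e1.mp h)), if_neg h1]
      ring
    · rw [if_neg (fun h => h1 (e1.mp h)), if_neg h1]
      ring
  rw [Finset.sum_congr rfl fun i _ => hstep i, Finset.sum_ite_eq' Finset.univ (k - n)]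
  simp only [Finset.mem_univ, if_true]
  by_cases hkl : k = l
  · simp [hkl]
  · have hne : k - n ≠ l - n := fun h => hkl (by
      have := congrArg (· + n) h
      simpa using this)
    simp [hne, hkl]

end bvec


section specific

lemma ptraceA_kron_sum {κ ιA ιB : Type*} [Fintype κ] [Fintype ιA] [Fintype ιB]
    (a : κ → Matrix ιA ιA ℂ) (b : κ → Matrix ιB ιB ℂ) :
    ptraceA (∑ i, a i ⊗ₖ b i) = Matrix.of fun k l => ∑ i, (a i).trace * b i k l := by
  ext k l
  simp only [ptraceA, Matrix.of_apply, Matrix.sum_apply, kroneckerMap_apply,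
    Matrix.trace, Matrix.diag, Finset.sum_mul]
  rw [Finset.sum_comm]

lemma trace_sum_kron_mul {κ ιA ιB : Type*} [Fintype κ] [Fintype ιA] [Fintype ιB]
    (a : κ → Matrix ιA ιA ℂ) (b : κ → Matrix ιB ιB ℂ)
    (J : Matrix (ιA × ιB) (ιA × ιB) ℂ) :
    ((∑ i, a i ⊗ₖ b i) * J).trace = ∑ i, ((a i ⊗ₖ b i) * J).trace := by
  rw [Matrix.sum_mul, Matrix.trace_sum]

lemma zero_ne_one_fin (d : ℕ) [NeZero d] (h : 2 ≤ d) : (0 : Fin d) ≠ 1 := by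
  intro hh
  have h2 := congrArg Fin.val hh
  have h1 : ((1 : Fin d)).val = 1 % d := Fin.val_one' d
  rw [Fin.val_zero, h1, Nat.mod_eq_of_lt (by omega)] at h2
  exact absurd h2 (by norm_num)

lemma ne_add_one (d : ℕ) [NeZero d] (h : 2 ≤ d) (i : Fin d) : i ≠ i + 1 := by
  intro hh
  have h0 : i + 0 = i + 1 := by rw [add_zero]; exact hh
  exact zero_ne_one_fin d h (add_left_cancel h0)

/-- standard basis vector -/
def evec (d : ℕ) (i : Fin d) : Fin d → ℂ := fun j => if j = i then 1 else 0

lemma evec_inner (d : ℕ) (i i' : Fin d) :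
    (∑ j, conj' (evec d i j) * evec d i' j) = if i = i' then 1 else 0 := by
  have hstep : ∀ j : Fin d, conj' (evec d i j) * evec d i' j
      = if j = i then (if j = i' then (1 : ℂ) else 0) else 0 := by
    intro j
    simp only [evec, apply_ite conj', _root_.map_one, _root_.map_zero]
    by_cases h1 : j = i <;> by_cases h2 : j = i' <;> simp [h1, h2]
  rw [Finset.sum_congr rfl fun j _ => hstep j, Finset.sum_ite_eq' Finset.univ i]
  simp only [Finset.mem_univ, if_true]

/-- the optimal separable operator for one copy -/
def sOm0 (d : ℕ) [NeZero d] : Matrix ((Fin d) × (Fin d)) ((Fin d) × (Fin d)) ℂ :=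
  ∑ i : Fin d, outer (evec d i) ⊗ₖ outer (evec d (i + 1))

lemma trace_outer_evec (d : ℕ) (i : Fin d) : (outer (evec d i)).trace = 1 := by
  rw [Matrix.trace]
  simp only [Matrix.diag, outer, Matrix.of_apply]
  rw [Finset.sum_congr rfl fun j _ => mul_comm _ _, evec_inner d i i, if_pos rfl]

lemma sOm0_ptrace (d : ℕ) [NeZero d] : ptraceA (sOm0 d) = 1 := by
  rw [sOm0, ptraceA_kron_sum]
  ext k l
  simp only [Matrix.of_apply]
  rw [Finset.sum_congr rfl fun i _ => by rw [trace_outer_evec d i, one_mul]]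
  rw [show (∑ i : Fin d, outer (evec d (i + 1)) k l)
      = ∑ j : Fin d, outer (evec d j) k l from
    Fintype.sum_equiv (Equiv.addRight (1 : Fin d)) _ _ (fun i => rfl)]
  have hstep : ∀ j : Fin d, outer (evec d j) k l
      = if k = j then (if l = j then (1 : ℂ) else 0) else 0 := by
    intro j
    simp only [outer, Matrix.of_apply, evec, apply_ite conj', _root_.map_one, _root_.map_zero]
    by_cases h1 : k = j <;> by_cases h2 : l = j <;> simp [h1, h2]
  rw [Finset.sum_congr rfl fun j _ => hstep j, Finset.sum_ite_eq Finset.univ k]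
  simp only [Finset.mem_univ, if_true, Matrix.one_apply]
  by_cases h : k = l
  · subst h
    simp
  · rw [if_neg (fun hh => h hh.symm), if_neg h]

lemma sOm0_value (d : ℕ) [NeZero d] (hd : 2 ≤ d) (c : ℂ) :
    ((sOm0 d) * (c • gW (Fin d))).trace = (d : ℂ) * c := by
  rw [sOm0, trace_sum_kron_mul]
  have hterm : ∀ i : Fin d,
      ((outer (evec d i) ⊗ₖ outer (evec d (i + 1))) * (c • gW (Fin d))).trace = c := by
    intro i
    rw [kron_quad, smul_mulVec, dotProduct_smul, smul_eq_mul]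
    rw [show (fun p : Fin d × Fin d => evec d i p.1 * evec d (i + 1) p.2)
        = wv (evec d i) (evec d (i + 1)) from rfl, quad_gW]
    rw [evec_inner d i i, evec_inner d (i + 1) (i + 1), evec_inner d i (i + 1),
      evec_inner d (i + 1) i]
    have hne : i ≠ i + 1 := ne_add_one d hd i
    rw [if_pos rfl, if_pos rfl, if_neg hne, if_neg (fun h => hne h.symm)]
    ring
  rw [Finset.sum_congr rfl fun i _ => hterm i, Finset.sum_const, Finset.card_univ,
    Fintype.card_fin, nsmul_eq_mul]

/-- scaled entangled vector -/
def svec (d : ℕ) (m n : Fin d) [NeZero d] : Fin d × Fin d → ℂ :=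
  fun p => (d : ℂ)⁻¹ * bvec d m n p

/-- the optimal separable operator for two copies -/
def sOm1 (d : ℕ) [NeZero d] :
    Matrix ((Fin d × Fin d) × (Fin d × Fin d)) ((Fin d × Fin d) × (Fin d × Fin d)) ℂ :=
  ∑ q : Fin d × Fin d, outer (bvec d q.1 q.2) ⊗ₖ outer (svec d q.1 q.2)

lemma bvec_selfsum (d : ℕ) [NeZero d] (m n : Fin d) :
    (∑ p : Fin d × Fin d, conj' (bvec d m n p) * bvec d m n p) = (d : ℂ) := by
  rw [Fintype.sum_prod_type]
  have h : ∀ k : Fin d, (∑ i, conj' (bvec d m n (k, i)) * bvec d m n (k, i)) = 1 := by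
    intro k
    rw [Finset.sum_congr rfl fun i _ => mul_comm _ _, bvec_rowsum d m n k k, if_pos rfl]
  rw [Finset.sum_congr rfl fun k _ => h k]
  simp

lemma conj_inv_nat (d : ℕ) : conj' ((d : ℂ)⁻¹) = (d : ℂ)⁻¹ := by
  rw [map_inv₀, Complex.conj_natCast]

lemma sum_outer_bvec_apply (d : ℕ) [NeZero d] (hd0 : 0 < d) (x y : Fin d × Fin d) :
    (∑ q : Fin d × Fin d, outer (bvec d q.1 q.2) x y) = if x = y then (d : ℂ) else 0 := by
  obtain ⟨a, a'⟩ := x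
  obtain ⟨c, c'⟩ := y
  rw [Fintype.sum_prod_type]
  have hterm : ∀ m n : Fin d, outer (bvec d m n) (a, a') (c, c')
      = (ζd d ^ (m.val * a.val) * conj' (ζd d ^ (m.val * c.val)))
        * ((if a' = a + n then (1 : ℂ) else 0) * (if c' = c + n then 1 else 0)) := by
    intro m n
    simp only [outer, Matrix.of_apply, bvec, _root_.map_mul, apply_ite conj',
      _root_.map_one, _root_.map_zero]
    ring
  rw [Finset.sum_congr rfl fun m _ => Finset.sum_congr rfl fun n _ => hterm m n]
  rw [show (∑ m : Fin d, ∑ n : Fin d, (ζd d ^ (m.val * a.val) * conj' (ζd d ^ (m.val * c.val)))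
        * ((if a' = a + n then (1 : ℂ) else 0) * (if c' = c + n then 1 else 0)))
      = (∑ m : Fin d, ζd d ^ (m.val * a.val) * conj' (ζd d ^ (m.val * c.val)))
        * (∑ n : Fin d, (if a' = a + n then (1 : ℂ) else 0) * (if c' = c + n then 1 else 0)) from by
    rw [Finset.sum_mul_sum]]
  rw [zeta_sum d hd0 a c]
  have hg : (∑ n : Fin d, (if a' = a + n then (1 : ℂ) else 0) * (if c' = c + n then 1 else 0))
      = if c' = c + (a' - a) then (1 : ℂ) else 0 := by
    have hstep : ∀ n : Fin d, (if a' = a + n then (1 : ℂ) else 0) * (if c' = c + n then 1 else 0)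
        = if n = a' - a then (if c' = c + n then (1 : ℂ) else 0) else 0 := by
      intro n
      have e1 : (a' = a + n) ↔ (n = a' - a) := by
        constructor
        · intro h; rw [h]; abel
        · intro h; rw [h]; abel
      by_cases h : n = a' - a
      · rw [if_pos (e1.mpr h), if_pos h, one_mul]
      · rw [if_neg (fun hh => h (e1.mp hh)), if_neg h, zero_mul]
    rw [Finset.sum_congr rfl fun n _ => hstep n, Finset.sum_ite_eq' Finset.univ (a' - a)]
    simp
  rw [hg]
  by_cases hac : a = c
  · subst hac
    rw [if_pos rfl]
    have hiff : (c' = a + (a' - a)) ↔ ((a, a') = (a, c')) := by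
      have h0 : a + (a' - a) = a' := by abel
      rw [h0, Prod.mk.injEq]
      constructor
      · intro h; exact ⟨rfl, h.symm⟩
      · intro h; exact h.2.symm
    by_cases h3 : c' = a + (a' - a)
    · rw [if_pos h3, if_pos (hiff.mp h3), mul_one]
    · rw [if_neg h3, if_neg (fun hh => h3 (hiff.mpr hh)), mul_zero]
  · rw [if_neg hac, zero_mul, if_neg (fun hh => hac (congrArg Prod.fst hh))]

lemma sOm1_ptrace (d : ℕ) [NeZero d] (hd0 : 0 < d) : ptraceA (sOm1 d) = 1 := by
  rw [sOm1, ptraceA_kron_sum]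
  ext k l
  simp only [Matrix.of_apply]
  have hd0C : (d : ℂ) ≠ 0 := Nat.cast_ne_zero.mpr hd0.ne'
  have htr : ∀ q : Fin d × Fin d, (outer (bvec d q.1 q.2)).trace = (d : ℂ) := by
    intro q
    rw [Matrix.trace]
    simp only [Matrix.diag, outer, Matrix.of_apply]
    rw [Finset.sum_congr rfl fun p _ => mul_comm _ _, bvec_selfsum d q.1 q.2]
  have hsv : ∀ (q : Fin d × Fin d) (x y : Fin d × Fin d),
      outer (svec d q.1 q.2) x y = (d : ℂ)⁻¹ * ((d : ℂ)⁻¹ * outer (bvec d q.1 q.2) x y) := by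
    intro q x y
    simp only [outer, svec, Matrix.of_apply, _root_.map_mul, conj_inv_nat]
    ring
  have hsum : (∑ q : Fin d × Fin d, (outer (bvec d q.1 q.2)).trace * outer (svec d q.1 q.2) k l)
      = (d : ℂ)⁻¹ * ∑ q : Fin d × Fin d, outer (bvec d q.1 q.2) k l := by
    rw [Finset.mul_sum]
    refine Finset.sum_congr rfl fun q _ => ?_
    rw [htr q, hsv q k l, ← mul_assoc, ← mul_assoc, mul_inv_cancel₀ hd0C, one_mul]
  rw [hsum, sum_outer_bvec_apply d hd0 k l, Matrix.one_apply]
  by_cases h : k = l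
  · rw [if_pos h, if_pos h, inv_mul_cancel₀ hd0C]
  · rw [if_neg h, if_neg h, mul_zero]

lemma sOm1_value (d : ℕ) [NeZero d] (hd : 2 ≤ d) (c : ℂ) :
    ((sOm1 d) * (c • gWT (Fin d))).trace
      = (d : ℂ) ^ 2 * (c * (2 - 2 * (d : ℂ)⁻¹)) := by
  have hd0C : (d : ℂ) ≠ 0 := Nat.cast_ne_zero.mpr (by omega)
  rw [sOm1, trace_sum_kron_mul]
  have hterm : ∀ q : Fin d × Fin d,
      ((outer (bvec d q.1 q.2) ⊗ₖ outer (svec d q.1 q.2)) * (c • gWT (Fin d))).trace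
        = c * (2 - 2 * (d : ℂ)⁻¹) := by
    intro q
    rw [kron_quad, smul_mulVec, dotProduct_smul, smul_eq_mul]
    rw [show (fun p : (Fin d × Fin d) × (Fin d × Fin d) =>
        bvec d q.1 q.2 p.1 * svec d q.1 q.2 p.2)
      = wv (bvec d q.1 q.2) (svec d q.1 q.2) from rfl, quad_gWT]
    set u : Fin d × Fin d → ℂ := bvec d q.1 q.2 with hu
    have hsv : ∀ p, svec d q.1 q.2 p = (d : ℂ)⁻¹ * u p := fun p => rfl
    have h1 : (∑ p : Fin d × Fin d, conj' (u p) * u p) = (d : ℂ) := bvec_selfsum d q.1 q.2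
    have h2 : (∑ p : Fin d × Fin d, conj' (svec d q.1 q.2 p) * svec d q.1 q.2 p)
        = (d : ℂ)⁻¹ := by
      rw [Finset.sum_congr rfl fun p _ => show
        conj' (svec d q.1 q.2 p) * svec d q.1 q.2 p
          = (d : ℂ)⁻¹ * ((d : ℂ)⁻¹ * (conj' (u p) * u p)) from by
        rw [hsv p, _root_.map_mul, conj_inv_nat]; ring]
      rw [← Finset.mul_sum, ← Finset.mul_sum, h1]
      field_simp
    have h3 : (∑ p : Fin d × Fin d, conj' (u p) * svec d q.1 q.2 p) = 1 := by
      rw [Finset.sum_congr rfl fun p _ => show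
        conj' (u p) * svec d q.1 q.2 p = (d : ℂ)⁻¹ * (conj' (u p) * u p) from by
        rw [hsv p]; ring]
      rw [← Finset.mul_sum, h1, inv_mul_cancel₀ hd0C]
    have h4 : (∑ p : Fin d × Fin d, conj' (svec d q.1 q.2 p) * u p) = 1 := by
      rw [Finset.sum_congr rfl fun p _ => show
        conj' (svec d q.1 q.2 p) * u p = (d : ℂ)⁻¹ * (conj' (u p) * u p) from by
        rw [hsv p, _root_.map_mul, conj_inv_nat]; ring]
      rw [← Finset.mul_sum, h1, inv_mul_cancel₀ hd0C]
    have hrowc : ∀ k l : Fin d, (∑ j, conj' (u (k, j)) * u (l, j))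
        = if k = l then 1 else 0 := by
      intro k l
      calc (∑ j, conj' (u (k, j)) * u (l, j))
          = conj' (∑ j, u (k, j) * conj' (u (l, j))) := by
            rw [map_sum]
            refine Finset.sum_congr rfl fun j _ => ?_
            rw [_root_.map_mul, Complex.conj_conj]
        _ = _ := by
            rw [bvec_rowsum d q.1 q.2 k l]
            by_cases h : k = l <;> simp [h]
    have hcolc : ∀ k l : Fin d, (∑ j, conj' (u (j, k)) * u (j, l))
        = if k = l then 1 else 0 := by
      intro k l
      calc (∑ j, conj' (u (j, k)) * u (j, l))
          = conj' (∑ j, u (j, k) * conj' (u (j, l))) := by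
            rw [map_sum]
            refine Finset.sum_congr rfl fun j _ => ?_
            rw [_root_.map_mul, Complex.conj_conj]
        _ = _ := by
            rw [bvec_colsum d q.1 q.2 k l]
            by_cases h : k = l <;> simp [h]
    have h5 : (∑ k, ∑ l, (∑ i, u (k, i) * conj' (svec d q.1 q.2 (l, i)))
        * (∑ j, conj' (u (k, j)) * svec d q.1 q.2 (l, j))) = (d : ℂ)⁻¹ := by
      have hin1 : ∀ k l : Fin d, (∑ i, u (k, i) * conj' (svec d q.1 q.2 (l, i)))
          = (d : ℂ)⁻¹ * (if k = l then 1 else 0) := by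
        intro k l
        rw [Finset.sum_congr rfl fun i _ => show
          u (k, i) * conj' (svec d q.1 q.2 (l, i))
            = (d : ℂ)⁻¹ * (u (k, i) * conj' (u (l, i))) from by
          rw [hsv, _root_.map_mul, conj_inv_nat]; ring]
        rw [← Finset.mul_sum, bvec_rowsum d q.1 q.2 k l]
      have hin2 : ∀ k l : Fin d, (∑ j, conj' (u (k, j)) * svec d q.1 q.2 (l, j))
          = (d : ℂ)⁻¹ * (if k = l then 1 else 0) := by
        intro k l
        rw [Finset.sum_congr rfl fun j _ => show
          conj' (u (k, j)) * svec d q.1 q.2 (l, j)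
            = (d : ℂ)⁻¹ * (conj' (u (k, j)) * u (l, j)) from by
          rw [hsv]; ring]
        rw [← Finset.mul_sum, hrowc k l]
      rw [Finset.sum_congr rfl fun k _ => Finset.sum_congr rfl fun l _ => by
        rw [hin1 k l, hin2 k l]]
      rw [Finset.sum_congr rfl fun k _ => show
        (∑ l, ((d : ℂ)⁻¹ * (if k = l then 1 else 0)) * ((d : ℂ)⁻¹ * (if k = l then 1 else 0)))
          = (d : ℂ)⁻¹ * (d : ℂ)⁻¹ from by
        rw [Finset.sum_congr rfl fun l _ => show
          ((d : ℂ)⁻¹ * (if k = l then 1 else 0)) * ((d : ℂ)⁻¹ * (if k = l then 1 else 0))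
            = if k = l then (d : ℂ)⁻¹ * (d : ℂ)⁻¹ else 0 from by
          by_cases h : k = l <;> simp [h]]
        rw [Finset.sum_ite_eq Finset.univ k, if_pos (Finset.mem_univ k)]]
      rw [Finset.sum_const, Finset.card_univ, Fintype.card_fin, nsmul_eq_mul]
      field_simp
    have h6 : (∑ k, ∑ l, (∑ i, u (i, k) * conj' (svec d q.1 q.2 (i, l)))
        * (∑ j, conj' (u (j, k)) * svec d q.1 q.2 (j, l))) = (d : ℂ)⁻¹ := by
      have hin1 : ∀ k l : Fin d, (∑ i, u (i, k) * conj' (svec d q.1 q.2 (i, l)))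
          = (d : ℂ)⁻¹ * (if k = l then 1 else 0) := by
        intro k l
        rw [Finset.sum_congr rfl fun i _ => show
          u (i, k) * conj' (svec d q.1 q.2 (i, l))
            = (d : ℂ)⁻¹ * (u (i, k) * conj' (u (i, l))) from by
          rw [hsv, _root_.map_mul, conj_inv_nat]; ring]
        rw [← Finset.mul_sum, bvec_colsum d q.1 q.2 k l]
      have hin2 : ∀ k l : Fin d, (∑ j, conj' (u (j, k)) * svec d q.1 q.2 (j, l))
          = (d : ℂ)⁻¹ * (if k = l then 1 else 0) := by
        intro k l
        rw [Finset.sum_congr rfl fun j _ => show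
          conj' (u (j, k)) * svec d q.1 q.2 (j, l)
            = (d : ℂ)⁻¹ * (conj' (u (j, k)) * u (j, l)) from by
          rw [hsv]; ring]
        rw [← Finset.mul_sum, hcolc k l]
      rw [Finset.sum_congr rfl fun k _ => Finset.sum_congr rfl fun l _ => by
        rw [hin1 k l, hin2 k l]]
      rw [Finset.sum_congr rfl fun k _ => show
        (∑ l, ((d : ℂ)⁻¹ * (if k = l then 1 else 0)) * ((d : ℂ)⁻¹ * (if k = l then 1 else 0)))
          = (d : ℂ)⁻¹ * (d : ℂ)⁻¹ from by
        rw [Finset.sum_congr rfl fun l _ => show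
          ((d : ℂ)⁻¹ * (if k = l then 1 else 0)) * ((d : ℂ)⁻¹ * (if k = l then 1 else 0))
            = if k = l then (d : ℂ)⁻¹ * (d : ℂ)⁻¹ else 0 from by
          by_cases h : k = l <;> simp [h]]
        rw [Finset.sum_ite_eq Finset.univ k, if_pos (Finset.mem_univ k)]]
      rw [Finset.sum_const, Finset.card_univ, Fintype.card_fin, nsmul_eq_mul]
      field_simp
    rw [h1, h2, h3, h4, h5, h6, mul_inv_cancel₀ hd0C]
    ring
  rw [Finset.sum_congr rfl fun q _ => hterm q, Finset.sum_const, Finset.card_univ]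
  rw [show (Fintype.card (Fin d × Fin d)) = d * d by simp, nsmul_eq_mul]
  push_cast
  ring

lemma std_kron {ι : Type*} [DecidableEq ι] (x y : ι × ι) :
    Matrix.single x y (1 : ℂ)
      = Matrix.single x.1 y.1 1 ⊗ₖ Matrix.single x.2 y.2 1 := by
  ext b e
  simp only [Matrix.single, Matrix.of_apply, kroneckerMap_apply, Prod.ext_iff]
  by_cases h1 : x.1 = b.1 <;> by_cases h2 : x.2 = b.2 <;> by_cases h3 : y.1 = e.1 <;>
    by_cases h4 : y.2 = e.2 <;> simp [h1, h2, h3, h4]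

end specific

end CVWH
end

/-- For the Werner-Holevo channel `W_{d,0}` (Choi matrix `(I − F)/(d−1)`),
`cv = d/(d−1)`, the two-copy value is `2d/(d−1)`, and cv is strictly
non-multiplicative whenever `d ≥ 3`. -/
theorem cv_werner_holevo_nonmultiplicative (d : ℕ) (hd : 2 ≤ d)
    (N : Channel (Fin d) (Fin d))
    (hN : choi N.map = (((d : ℂ) - 1)⁻¹) • ((1 : Matrix (Fin d × Fin d) (Fin d × Fin d) ℂ) - swapMat d))
    (T : Channel (Fin d × Fin d) (Fin d × Fin d))
    (hT : ∀ (X Y : Matrix (Fin d) (Fin d) ℂ),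
      T.map (X ⊗ₖ Y) = N.map X ⊗ₖ N.map Y) :
    cv N = d / ((d : ℝ) - 1) ∧ cv T = 2 * d / ((d : ℝ) - 1) ∧
      (3 ≤ d → cv N ^ 2 < cv T) := by
  classical
  haveI : NeZero d := ⟨by omega⟩
  have hd0 : 0 < d := by omega
  have hdR : (2 : ℝ) ≤ (d : ℝ) := by exact_mod_cast hd
  have hdR0 : (0 : ℝ) < (d : ℝ) - 1 := by linarith
  have hd0C : (d : ℂ) ≠ 0 := Nat.cast_ne_zero.mpr (by omega)
  have hdC : ((d : ℂ) - 1) ≠ 0 := by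
    intro h
    have h2 := congrArg Complex.re h
    simp only [Complex.sub_re, Complex.natCast_re, Complex.one_re, Complex.zero_re] at h2
    linarith
  set lamN : ℝ := ((d : ℝ) - 1)⁻¹ with hlamN
  have hlamN0 : 0 ≤ lamN := le_of_lt (inv_pos.mpr hdR0)
  have hccR : ((d : ℂ) - 1)⁻¹ = ((lamN : ℝ) : ℂ) := by
    rw [hlamN]
    push_cast
    ring
  have hJN : choi N.map = (((d : ℂ) - 1)⁻¹) • CVWH.gW (Fin d) := by
    rw [hN]
    rfl
  have hJT : choi T.map = ((((d : ℂ) - 1)⁻¹) ^ 2) • CVWH.gWT (Fin d) := by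
    ext Q P
    have h1 : choi T.map Q P
        = choi N.map (Q.1.1, Q.2.1) (P.1.1, P.2.1)
          * choi N.map (Q.1.2, Q.2.2) (P.1.2, P.2.2) := by
      show T.map (Matrix.single Q.1 P.1 1) Q.2 P.2 = _
      rw [CVWH.std_kron Q.1 P.1, hT]
      rfl
    rw [h1, hJN]
    simp only [Matrix.smul_apply, smul_eq_mul, CVWH.gWT, Matrix.of_apply]
    ring
  -- one copy
  have hgreatestN : IsGreatest {r | ∃ Ω : Matrix ((Fin d) × (Fin d)) ((Fin d) × (Fin d)) ℂ,
      IsSep Ω ∧ ptraceA Ω = 1 ∧ r = ((Ω * choi N.map).trace).re}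
      ((d : ℝ) / ((d : ℝ) - 1)) := by
    constructor
    · refine ⟨CVWH.sOm0 d, ?_, CVWH.sOm0_ptrace d, ?_⟩
      · exact ⟨d, fun i => CVWH.outer (CVWH.evec d i),
          fun i => CVWH.outer (CVWH.evec d (i + 1)),
          fun i => CVWH.outer_posSemidef _, fun i => CVWH.outer_posSemidef _, rfl⟩
      · rw [hJN, CVWH.sOm0_value d hd,
          show (d : ℂ) * ((d : ℂ) - 1)⁻¹ = (((d : ℝ) / ((d : ℝ) - 1) : ℝ) : ℂ) from by
            push_cast
            ring,
          Complex.ofReal_re]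
    · rintro r ⟨Ω, hsep, hpt, rfl⟩
      have hq : ∀ (u : Fin d → ℂ) (v : Fin d → ℂ),
          ((star (fun p : Fin d × Fin d => u p.1 * v p.2)) ⬝ᵥ
            choi N.map *ᵥ (fun p : Fin d × Fin d => u p.1 * v p.2)).re
            ≤ lamN * ((∑ i, ‖u i‖ ^ 2) * (∑ k, ‖v k‖ ^ 2)) := by
        intro u v
        rw [hJN, smul_mulVec, dotProduct_smul, smul_eq_mul, hccR,
          Complex.re_ofReal_mul]
        exact mul_le_mul_of_nonneg_left (CVWH.quad_gW_re_le u v) hlamN0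
      have hb := CVWH.sep_trace_le (choi N.map) lamN hq hsep hpt
      rw [Fintype.card_fin] at hb
      calc ((Ω * choi N.map).trace).re ≤ lamN * d := hb
        _ = (d : ℝ) / ((d : ℝ) - 1) := by rw [hlamN, inv_mul_eq_div]
  -- two copies
  set lamT : ℝ := lamN ^ 2 * (2 * ((d : ℝ) - 1) / (d : ℝ)) with hlamT
  have hgreatestT : IsGreatest {r | ∃ Ω : Matrix ((Fin d × Fin d) × (Fin d × Fin d))
        ((Fin d × Fin d) × (Fin d × Fin d)) ℂ,
      IsSep Ω ∧ ptraceA Ω = 1 ∧ r = ((Ω * choi T.map).trace).re}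
      (2 * (d : ℝ) / ((d : ℝ) - 1)) := by
    constructor
    · refine ⟨CVWH.sOm1 d, ?_, CVWH.sOm1_ptrace d hd0, ?_⟩
      · refine ⟨d * d,
          fun i => CVWH.outer (CVWH.bvec d (finProdFinEquiv.symm i).1 (finProdFinEquiv.symm i).2),
          fun i => CVWH.outer (CVWH.svec d (finProdFinEquiv.symm i).1 (finProdFinEquiv.symm i).2),
          fun i => CVWH.outer_posSemidef _, fun i => CVWH.outer_posSemidef _, ?_⟩
        rw [CVWH.sOm1]
        exact Fintype.sum_equiv finProdFinEquiv _ _ (fun q => by simp)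
      · rw [hJT, CVWH.sOm1_value d hd,
          show (d : ℂ) ^ 2 * (((((d : ℂ) - 1)⁻¹) ^ 2) * (2 - 2 * (d : ℂ)⁻¹))
              = ((2 * (d : ℝ) / ((d : ℝ) - 1) : ℝ) : ℂ) from by
            push_cast
            field_simp,
          Complex.ofReal_re]
    · rintro r ⟨Ω, hsep, hpt, rfl⟩
      have hq : ∀ (u : Fin d × Fin d → ℂ) (v : Fin d × Fin d → ℂ),
          ((star (fun p : (Fin d × Fin d) × (Fin d × Fin d) => u p.1 * v p.2)) ⬝ᵥ
            choi T.map *ᵥ (fun p : (Fin d × Fin d) × (Fin d × Fin d) => u p.1 * v p.2)).re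
            ≤ lamT * ((∑ i, ‖u i‖ ^ 2) * (∑ k, ‖v k‖ ^ 2)) := by
        intro u v
        rw [hJT, smul_mulVec, dotProduct_smul, smul_eq_mul,
          show ((((d : ℂ) - 1)⁻¹) ^ 2) = (((lamN ^ 2 : ℝ) : ℝ) : ℂ) from by
            rw [hccR]
            push_cast
            ring,
          Complex.re_ofReal_mul]
        have hb := CVWH.quad_gWT_re_le (ι := Fin d)
          (by rw [Fintype.card_fin]; exact hd) u v
        rw [Fintype.card_fin] at hb
        calc lamN ^ 2 * ((star (CVWH.wv u v)) ⬝ᵥ CVWH.gWT (Fin d) *ᵥ CVWH.wv u v).re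
            ≤ lamN ^ 2 * ((2 * ((d : ℝ) - 1) / (d : ℝ)) * ((∑ i, ‖u i‖ ^ 2) * (∑ k, ‖v k‖ ^ 2))) :=
              mul_le_mul_of_nonneg_left hb (by positivity)
          _ = lamT * ((∑ i, ‖u i‖ ^ 2) * (∑ k, ‖v k‖ ^ 2)) := by
              rw [hlamT]
              ring
      have hb := CVWH.sep_trace_le (choi T.map) lamT hq hsep hpt
      rw [show ((Fintype.card (Fin d × Fin d) : ℕ) : ℝ) = (d : ℝ) * (d : ℝ) from by
        simp [Fintype.card_prod]] at hb
      calc ((Ω * choi T.map).trace).re ≤ lamT * ((d : ℝ) * (d : ℝ)) := hb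
        _ = 2 * (d : ℝ) / ((d : ℝ) - 1) := by
            rw [hlamT, hlamN]
            have hdne : (d : ℝ) ≠ 0 := by linarith
            field_simp
  have hcvN : cv N = (d : ℝ) / ((d : ℝ) - 1) := hgreatestN.csSup_eq
  have hcvT : cv T = 2 * (d : ℝ) / ((d : ℝ) - 1) := hgreatestT.csSup_eq
  refine ⟨hcvN, hcvT, fun h3 => ?_⟩
  rw [hcvN, hcvT]
  have h3R : (3 : ℝ) ≤ (d : ℝ) := by exact_mod_cast h3
  rw [div_pow, div_lt_div_iff₀ (by positivity) hdR0]
  nlinarith [hdR0, h3R]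
end
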